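/- arXiv:0904.2448 — 5 statements merged into one kernel-verified Lean document; each statement's English description precedes it below -/
import Mathlib

section
/- Every binary 1-nested network is a galled tree: in a rooted DAG where every hybrid node has in-degree 2 and out-degree 1, every internal tree node has out-degree 2, and no node is intermediate in reticulation cycles for two different hybrid nodes, any two distinct reticulation cycles have disjoint node sets. -/
/-- An evolutionary network: a rooted directed acyclic graph. -/
structure EvoNet (V : Type*) where
  arc : V → V → Prop
  root : V
  acyclic : ∀ v : V, ¬ Relation.TransGen arc v v
  rooted : ∀ v : V, Relation.ReflTransGen arc root v

namespace EvoNet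

variable {V : Type*}

/-- A hybrid node: in-degree at least 2. -/
def IsHybrid (N : EvoNet V) (v : V) : Prop :=
  ∃ u w : V, u ≠ w ∧ N.arc u v ∧ N.arc w v

/-- A tree node: in-degree at most 1. -/
def IsTreeNode (N : EvoNet V) (v : V) : Prop := ¬ N.IsHybrid v

/-- A (directed) path, given as its nonempty list of nodes. -/
def IsPath (N : EvoNet V) (p : List V) : Prop := p ≠ [] ∧ p.Chain' N.arc

/-- The intermediate (non-endpoint) nodes of a path. -/
def interm (p : List V) : Set V := {x | x ∈ (p.drop 1).dropLast}

/-- A reticulation cycle for the hybrid node `hend`: a pair of internally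
disjoint nontrivial paths with the same origin (the split node), both ending
in `hend`. -/
structure RetCycle (N : EvoNet V) where
  hend : V
  p : List V
  q : List V
  isPath_p : N.IsPath p
  isPath_q : N.IsPath q
  len_p : 2 ≤ p.length
  len_q : 2 ≤ q.length
  same_origin : p.head? = q.head?
  last_p : p.getLast? = some hend
  last_q : q.getLast? = some hend
  hybrid : N.IsHybrid hend
  intDisjoint : ∀ x : V, x ∈ interm p → x ∉ interm q
  ne : p ≠ q

/-- The nodes of a reticulation cycle. -/
def RetCycle.nodes {N : EvoNet V} (c : RetCycle N) : Set V :=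
  {x | x ∈ c.p ∨ x ∈ c.q}

/-- The arcs of a reticulation cycle. -/
def RetCycle.arcs {N : EvoNet V} (c : RetCycle N) : Set (V × V) :=
  {e | e ∈ c.p.zip c.p.tail ∨ e ∈ c.q.zip c.q.tail}

/-- The intermediate nodes of a reticulation cycle. -/
def RetCycle.intermNodes {N : EvoNet V} (c : RetCycle N) : Set V :=
  interm c.p ∪ interm c.q

/-- `s` is the split node of the reticulation cycle `c`. -/
def RetCycle.SplitIs {N : EvoNet V} (c : RetCycle N) (s : V) : Prop :=
  c.p.head? = some s

/-- Two reticulation cycles are the same (as unordered pairs of merge paths). -/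
def RetCycle.Equiv {N : EvoNet V} (c₁ c₂ : RetCycle N) : Prop :=
  (c₁.p = c₂.p ∧ c₁.q = c₂.q) ∨ (c₁.p = c₂.q ∧ c₁.q = c₂.p)

/-- 1-nested: no node is intermediate in reticulation cycles for two
different hybrid nodes. -/
def OneNested (N : EvoNet V) : Prop :=
  ∀ c₁ c₂ : RetCycle N, c₁.hend ≠ c₂.hend →
    ∀ x : V, x ∈ c₁.intermNodes → x ∉ c₂.intermNodes

/-- Galled tree: distinct reticulation cycles have disjoint node sets. -/
def Galled (N : EvoNet V) : Prop :=
  ∀ c₁ c₂ : RetCycle N, ¬ c₁.Equiv c₂ → Disjoint c₁.nodes c₂.nodes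

/-- Weakly galled tree: distinct reticulation cycles have disjoint arc sets. -/
def WeaklyGalled (N : EvoNet V) : Prop :=
  ∀ c₁ c₂ : RetCycle N, ¬ c₁.Equiv c₂ → Disjoint c₁.arcs c₂.arcs

/-- 2-hybrid: every hybrid node has in-degree exactly 2. -/
def TwoHybrid (N : EvoNet V) : Prop :=
  ∀ v : V, N.IsHybrid v →
    ∃ u w : V, u ≠ w ∧ N.arc u v ∧ N.arc w v ∧ ∀ z : V, N.arc z v → z = u ∨ z = w

/-- Hybrid-1: every hybrid node has out-degree exactly 1. -/
def HybridOne (N : EvoNet V) : Prop :=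
  ∀ v : V, N.IsHybrid v → ∃! w : V, N.arc v w

/-- Semibinary: hybrid nodes have in-degree 2 and out-degree 1. -/
def Semibinary (N : EvoNet V) : Prop := N.TwoHybrid ∧ N.HybridOne

/-- Node of out-degree exactly 2. -/
def OutDegTwo (N : EvoNet V) (v : V) : Prop :=
  ∃ u w : V, u ≠ w ∧ N.arc v u ∧ N.arc v w ∧ ∀ z : V, N.arc v z → z = u ∨ z = w

/-- An internal (non-leaf) node. -/
def IsInternal (N : EvoNet V) (v : V) : Prop := ∃ w : V, N.arc v w

/-- Binary (fully resolved): semibinary and internal tree nodes have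
out-degree 2. -/
def Binary (N : EvoNet V) : Prop :=
  N.Semibinary ∧ ∀ v : V, N.IsTreeNode v → N.IsInternal v → N.OutDegTwo v

/-- Undirected adjacency induced by a set of arcs. -/
def uadj (A : Set (V × V)) (x y : V) : Prop := (x, y) ∈ A ∨ (y, x) ∈ A

/-- The vertices of a subgraph given by a set of arcs. -/
def everts (A : Set (V × V)) : Set V := {x | ∃ y : V, (x, y) ∈ A ∨ (y, x) ∈ A}

/-- Connectedness of the underlying undirected graph of a set of arcs. -/
def EConnected (A : Set (V × V)) : Prop :=
  ∀ x y : V, x ∈ everts A → y ∈ everts A → Relation.ReflTransGen (uadj A) x y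

/-- Remove a node and all arcs incident to it. -/
def avoid (A : Set (V × V)) (v : V) : Set (V × V) :=
  {e ∈ A | e.1 ≠ v ∧ e.2 ≠ v}

/-- A biconnected subgraph of a network: a set of arcs of the network whose
underlying undirected graph is connected and remains connected after the
removal of any single node (with all arcs incident to it). -/
def Biconnected (N : EvoNet V) (A : Set (V × V)) : Prop :=
  (∀ e ∈ A, N.arc e.1 e.2) ∧ EConnected A ∧ ∀ v : V, EConnected (avoid A v)

/-- Level-1: no biconnected subgraph contains more than one hybrid node. -/
def LevelOne (N : EvoNet V) : Prop :=
  ∀ A : Set (V × V), N.Biconnected A →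
    ∀ h₁ h₂ : V, N.IsHybrid h₁ → N.IsHybrid h₂ →
      h₁ ∈ everts A → h₂ ∈ everts A → h₁ = h₂

/-- `v` is a descendant of `u`. -/
def Desc (N : EvoNet V) (u v : V) : Prop := Relation.ReflTransGen N.arc u v

/-- `v` is a proper descendant of `u`. -/
def ProperDesc (N : EvoNet V) (u v : V) : Prop := Relation.TransGen N.arc u v

/-- `w` is a minimal common ancestor of `u` and `v`: a common ancestor that is
a proper ancestor of no other common ancestor of them. -/
def IsMCA (N : EvoNet V) (w u v : V) : Prop :=
  N.Desc w u ∧ N.Desc w v ∧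
    ∀ z : V, N.Desc z u → N.Desc z v → ¬ N.ProperDesc w z

end EvoNet


section ListLemmas
variable {V : Type*} {R : V → V → Prop}

lemma chain_transGen {x y : V} {m : List V} (h : List.Chain R x m) (hy : y ∈ m) :
    Relation.TransGen R x y := by
  induction m generalizing x with
  | nil => simp at hy
  | cons b m ih =>
    rcases List.chain_cons.1 h with ⟨hab, hbm⟩
    rcases List.mem_cons.1 hy with rfl | hy'
    · exact Relation.TransGen.single hab
    · exact (ih hbm hy').head hab

lemma chain'_transGen_of_split {p l m : List V} {x y : V} (hc : p.Chain' R)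
    (hp : p = l ++ x :: m) (hy : y ∈ m) : Relation.TransGen R x y := by
  have hsuf : (x :: m) <:+ p := ⟨l, hp.symm⟩
  have : List.Chain' R (x :: m) := hc.suffix hsuf
  exact chain_transGen this hy

lemma mem_dropLast_split {l : List V} {x : V} (h : x ∈ l.dropLast) :
    ∃ l₁ l₂, l = l₁ ++ x :: l₂ ∧ l₂ ≠ [] := by
  have hne : l ≠ [] := by rintro rfl; simp at h
  obtain ⟨s, t, hst⟩ := List.append_of_mem h
  refine ⟨s, t ++ [l.getLast hne], ?_, by simp⟩
  conv_lhs => rw [← List.dropLast_append_getLast hne]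
  rw [hst]; simp

lemma interm_split {p : List V} {x : V} (h : x ∈ EvoNet.interm p) :
    ∃ l m, p = l ++ x :: m ∧ l ≠ [] ∧ m ≠ [] := by
  have h' : x ∈ (p.drop 1).dropLast := h
  obtain ⟨l₁, l₂, hl, hl₂⟩ := mem_dropLast_split h'
  have hpne : p ≠ [] := by rintro rfl; simp at h'
  obtain ⟨a, t, rfl⟩ := List.exists_cons_of_ne_nil hpne
  simp only [List.drop_one, List.tail_cons] at hl
  exact ⟨a :: l₁, l₂, by rw [hl]; simp, by simp, hl₂⟩

lemma split_interm {l m : List V} {x : V} (hl : l ≠ []) (hm : m ≠ []) :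
    x ∈ EvoNet.interm (l ++ x :: m) := by
  obtain ⟨a, l', rfl⟩ := List.exists_cons_of_ne_nil hl
  show x ∈ (((a :: l') ++ x :: m).drop 1).dropLast
  simp only [List.cons_append, List.drop_one, List.tail_cons]
  rw [List.dropLast_append_of_ne_nil (by simp)]
  rw [show (x :: m).dropLast = x :: m.dropLast from List.dropLast_cons_of_ne_nil hm]
  simp

lemma mem_of_interm {p : List V} {x : V} (h : x ∈ EvoNet.interm p) : x ∈ p := by
  obtain ⟨l, m, rfl, -, -⟩ := interm_split h
  simp

/-- first-difference lemma -/
lemma list_diff (r₁ r₂ : List V) (h : r₁ ≠ r₂) :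
    (∃ d, d ≠ [] ∧ r₂ = r₁ ++ d) ∨ (∃ d, d ≠ [] ∧ r₁ = r₂ ++ d) ∨
    ∃ c u₁ u₂ d₁ d₂, u₁ ≠ u₂ ∧ r₁ = c ++ u₁ :: d₁ ∧ r₂ = c ++ u₂ :: d₂ := by
  induction r₁ generalizing r₂ with
  | nil => exact Or.inl ⟨r₂, Ne.symm h, by simp⟩
  | cons a t ih =>
    cases r₂ with
    | nil => exact Or.inr (Or.inl ⟨a :: t, by simp, by simp⟩)
    | cons b t₂ =>
      by_cases hab : a = b
      · subst hab
        have ht : t ≠ t₂ := by rintro rfl; exact h rfl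
        rcases ih t₂ ht with ⟨d, hd, hd2⟩ | ⟨d, hd, hd2⟩ | ⟨c, u₁, u₂, d₁, d₂, hu, h1, h2⟩
        · exact Or.inl ⟨d, hd, by rw [hd2]; simp⟩
        · exact Or.inr (Or.inl ⟨d, hd, by rw [hd2]; simp⟩)
        · exact Or.inr (Or.inr ⟨a :: c, u₁, u₂, d₁, d₂, hu, by rw [h1]; simp, by rw [h2]; simp⟩)
      · exact Or.inr (Or.inr ⟨[], a, b, t, t₂, hab, by simp, by simp⟩)

end ListLemmas

namespace EvoNet
variable {V : Type*} {N : EvoNet V}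

lemma nodup_of_chain' {p : List V} (hc : p.Chain' N.arc) : p.Nodup := by
  induction p with
  | nil => simp
  | cons a t ih =>
    refine List.nodup_cons.2 ⟨fun hat => ?_, ih hc.tail⟩
    exact N.acyclic a (chain_transGen hc hat)

lemma getLast?_split {l m : List V} {x : V} : (l ++ x :: m).getLast? = (x :: m).getLast? :=
  List.getLast?_append_of_ne_nil l (by simp)

lemma mem_of_getLast?_eq {p : List V} {h : V} (hp : p.getLast? = some h) : h ∈ p :=
  List.mem_of_mem_getLast? hp

lemma interm_ne_head {p : List V} {x a : V} {t : List V} (hc : p.Chain' N.arc)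
    (hx : x ∈ interm p) (hp : p = a :: t) : x ≠ a := by
  rintro rfl
  obtain ⟨l, m, hsplit, hl, hm⟩ := interm_split hx
  obtain ⟨b, l', rfl⟩ := List.exists_cons_of_ne_nil hl
  rw [hp] at hsplit
  simp only [List.cons_append, List.cons.injEq] at hsplit
  have hxt : x ∈ t := by rw [hsplit.2]; simp
  rw [hp] at hc
  exact N.acyclic x (chain_transGen hc hxt)

lemma interm_ne_getLast {p : List V} {x h : V} (hc : p.Chain' N.arc)
    (hx : x ∈ interm p) (hp : p.getLast? = some h) : x ≠ h := by
  rintro rfl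
  obtain ⟨l, m, hsplit, hl, hm⟩ := interm_split hx
  have hg : p.getLast? = m.getLast? := by
    rw [hsplit, getLast?_split]
    obtain ⟨b, m', rfl⟩ := List.exists_cons_of_ne_nil hm
    rw [List.getLast?_cons_cons]
  have hxm : x ∈ m := mem_of_getLast?_eq (hg ▸ hp)
  exact N.acyclic x (chain'_transGen_of_split hc hsplit hxm)

lemma head_transGen_of_interm {p : List V} {a x : V} {t : List V} (hc : p.Chain' N.arc)
    (hx : x ∈ interm p) (hp : p = a :: t) : Relation.TransGen N.arc a x := by
  obtain ⟨l, m, hsplit, hl, hm⟩ := interm_split hx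
  obtain ⟨b, l', rfl⟩ := List.exists_cons_of_ne_nil hl
  rw [hp] at hsplit
  simp only [List.cons_append, List.cons.injEq] at hsplit
  have hxt : x ∈ t := by rw [hsplit.2]; simp
  rw [hp] at hc
  exact chain_transGen hc hxt

/-- decompose a path of length ≥ 2 ending at h as r ++ [a, h] -/
lemma exists_penult {p : List V} {h : V} (h2 : 2 ≤ p.length) (hl : p.getLast? = some h) :
    ∃ r a, p = r ++ [a, h] := by
  rcases p with _ | ⟨x, _ | ⟨y, t⟩⟩
  · simp at h2
  · simp at h2
  · clear h2
    induction t generalizing x y with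
    | nil =>
      refine ⟨[], x, ?_⟩
      simp only [List.getLast?_cons_cons, List.getLast?_singleton] at hl
      simp_all
    | cons z t ih =>
      obtain ⟨r, a, hra⟩ := ih y z (by rw [List.getLast?_cons_cons] at hl; exact hl)
      exact ⟨x :: r, a, by rw [List.cons_append, ← hra]⟩

lemma penult_arc {p r : List V} {a h : V} (hc : p.Chain' N.arc) (hp : p = r ++ [a, h]) :
    N.arc a h := by
  subst hp
  have := hc.suffix (l₁ := [a, h]) ⟨r, rfl⟩
  exact (List.isChain_cons_cons.1 this).1

/-- the penultimate element as computed from a decomposition is unique -/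
lemma penult_eq {p r r' : List V} {a a' h h' : V} (hp : p = r ++ [a, h]) (hp' : p = r' ++ [a', h']) :
    a = a' ∧ h = h' := by
  have h1 : p.reverse = h :: a :: r.reverse := by rw [hp]; simp
  have h2 : p.reverse = h' :: a' :: r'.reverse := by rw [hp']; simp
  rw [h1] at h2
  simp only [List.cons.injEq] at h2
  exact ⟨h2.2.1, h2.1⟩

end EvoNet

namespace EvoNet
variable {V : Type*} {N : EvoNet V}

/-- swap the two paths of a cycle -/
def RetCycle.swap (c : RetCycle N) : RetCycle N where
  hend := c.hend
  p := c.q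
  q := c.p
  isPath_p := c.isPath_q
  isPath_q := c.isPath_p
  len_p := c.len_q
  len_q := c.len_p
  same_origin := c.same_origin.symm
  last_p := c.last_q
  last_q := c.last_p
  hybrid := c.hybrid
  intDisjoint := fun x hq hp => c.intDisjoint x hp hq
  ne := c.ne.symm

@[simp] lemma RetCycle.swap_hend (c : RetCycle N) : c.swap.hend = c.hend := rfl
@[simp] lemma RetCycle.swap_p (c : RetCycle N) : c.swap.p = c.q := rfl
@[simp] lemma RetCycle.swap_q (c : RetCycle N) : c.swap.q = c.p := rfl

lemma RetCycle.swap_intermNodes (c : RetCycle N) : c.swap.intermNodes = c.intermNodes :=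
  Set.union_comm _ _

lemma RetCycle.chain_p (c : RetCycle N) : c.p.Chain' N.arc := c.isPath_p.2
lemma RetCycle.chain_q (c : RetCycle N) : c.q.Chain' N.arc := c.isPath_q.2

lemma RetCycle.destruct (c : RetCycle N) :
    ∃ s y₁ t₁ y₂ t₂, c.p = s :: y₁ :: t₁ ∧ c.q = s :: y₂ :: t₂ := by
  have h1 := c.len_p
  have h2 := c.len_q
  rcases hp : c.p with _ | ⟨s, _ | ⟨y₁, t₁⟩⟩ <;> rw [hp] at h1 <;> try simp at h1
  rcases hq : c.q with _ | ⟨s', _ | ⟨y₂, t₂⟩⟩ <;> rw [hq] at h2 <;> try simp at h2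
  have := c.same_origin
  rw [hp, hq] at this
  simp only [List.head?_cons, Option.some.injEq] at this
  subst this
  exact ⟨s, y₁, t₁, y₂, t₂, rfl, rfl⟩

lemma mem_path_cases {p : List V} {h x : V} (hne : p ≠ [])
    (hl : p.getLast? = some h) (hx : x ∈ p) :
    p.head? = some x ∨ x ∈ interm p ∨ x = h := by
  obtain ⟨a, t, rfl⟩ := List.exists_cons_of_ne_nil hne
  rcases List.mem_cons.1 hx with rfl | hxt
  · exact Or.inl rfl
  · have htne : t ≠ [] := by rintro rfl; simp at hxt
    rw [← List.dropLast_append_getLast htne] at hxt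
    rcases List.mem_append.1 hxt with hx1 | hx2
    · exact Or.inr (Or.inl (by show x ∈ ((a :: t).drop 1).dropLast; simpa using hx1))
    · right; right
      have hgl : (a :: t).getLast? = t.getLast? := by
        obtain ⟨b, t', rfl⟩ := List.exists_cons_of_ne_nil htne
        rw [List.getLast?_cons_cons]
      rw [hgl, List.getLast?_eq_getLast htne, Option.some_inj] at hl
      rw [List.mem_singleton.1 hx2, hl]
  
end EvoNet

namespace EvoNet
variable {V : Type*} {N : EvoNet V}

lemma interm_p_subset (c : RetCycle N) : interm c.p ⊆ c.intermNodes := Set.subset_union_left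
lemma interm_q_subset (c : RetCycle N) : interm c.q ⊆ c.intermNodes := Set.subset_union_right

/-- the two penultimate nodes of a cycle are distinct -/
lemma RetCycle.penult_ne (c : RetCycle N) {r₁ r₂ : List V} {a₁ a₂ h₁ h₂ : V}
    (hp : c.p = r₁ ++ [a₁, h₁]) (hq : c.q = r₂ ++ [a₂, h₂]) : a₁ ≠ a₂ := by
  rintro rfl
  rcases List.eq_nil_or_concat r₁ with rfl | ⟨r₁', z₁, rfl⟩ <;>
    rcases List.eq_nil_or_concat r₂ with rfl | ⟨r₂', z₂, rfl⟩
  · -- p = [a,h₁], q = [a,h₂]; lasts both hend so h₁ = h₂ = hend, p = q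
    have e1 : h₁ = c.hend := by
      have := c.last_p; rw [hp] at this; simpa using this
    have e2 : h₂ = c.hend := by
      have := c.last_q; rw [hq] at this; simpa using this
    exact c.ne (by rw [hp, hq, e1, e2])
  · -- p = [a₁, h₁]: head p = a₁, and a₁ ∈ interm q
    have hint : a₁ ∈ interm c.q := by
      rw [hq]; exact split_interm (by simp) (by simp)
    have hhead : c.q.head? = some a₁ := by
      rw [← c.same_origin, hp]; simp
    obtain ⟨b, t, hbt⟩ := List.exists_cons_of_ne_nil (c.isPath_q.1)
    rw [hbt] at hhead
    simp only [List.head?_cons, Option.some.injEq] at hhead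
    exact interm_ne_head c.chain_q hint hbt hhead.symm
  · have hint : a₁ ∈ interm c.p := by
      rw [hp]; exact split_interm (by simp) (by simp)
    have hhead : c.p.head? = some a₁ := by
      rw [c.same_origin, hq]; simp
    obtain ⟨b, t, hbt⟩ := List.exists_cons_of_ne_nil (c.isPath_p.1)
    rw [hbt] at hhead
    simp only [List.head?_cons, Option.some.injEq] at hhead
    exact interm_ne_head c.chain_p hint hbt hhead.symm
  · have h1 : a₁ ∈ interm c.p := by
      rw [hp]; exact split_interm (by simp) (by simp)
    have h2 : a₁ ∈ interm c.q := by
      rw [hq]; exact split_interm (by simp) (by simp)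
    exact c.intDisjoint a₁ h1 h2

/-- the two second nodes of a cycle are distinct -/
lemma RetCycle.second_ne (c : RetCycle N) {s y₁ y₂ : V} {t₁ t₂ : List V}
    (hp : c.p = s :: y₁ :: t₁) (hq : c.q = s :: y₂ :: t₂) : y₁ ≠ y₂ := by
  rintro rfl
  rcases List.eq_nil_or_concat' t₁ with rfl | ⟨t₁', z₁, rfl⟩ <;>
    rcases List.eq_nil_or_concat' t₂ with rfl | ⟨t₂', z₂, rfl⟩
  · exact c.ne (by rw [hp, hq])
  · -- p = [s, y]: y = hend; y ∈ interm q
    have e1 : y₁ = c.hend := by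
      have := c.last_p; rw [hp] at this; simpa using this
    have hint : y₁ ∈ interm c.q := by
      rw [hq]
      exact split_interm (l := [s]) (by simp) (by simp)
    exact interm_ne_getLast c.chain_q hint c.last_q (e1 ▸ rfl)
  · have e1 : y₁ = c.hend := by
      have := c.last_q; rw [hq] at this; simpa using this
    have hint : y₁ ∈ interm c.p := by
      rw [hp]
      exact split_interm (l := [s]) (by simp) (by simp)
    exact interm_ne_getLast c.chain_p hint c.last_p (e1 ▸ rfl)
  · have h1 : y₁ ∈ interm c.p := by
      rw [hp]; exact split_interm (l := [s]) (by simp) (by simp)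
    have h2 : y₁ ∈ interm c.q := by
      rw [hq]; exact split_interm (l := [s]) (by simp) (by simp)
    exact c.intDisjoint y₁ h1 h2

/-- the split node of a cycle is a tree node -/
lemma RetCycle.split_not_hybrid (hb : N.Binary) (c : RetCycle N) {s y₁ y₂ : V} {t₁ t₂ : List V}
    (hp : c.p = s :: y₁ :: t₁) (hq : c.q = s :: y₂ :: t₂) : ¬ N.IsHybrid s := by
  intro hs
  obtain ⟨w, ⟨hw, hwu⟩⟩ := hb.1.2 s hs
  have a1 : N.arc s y₁ := by
    have := c.chain_p; rw [hp] at this; exact (List.isChain_cons_cons.1 this).1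
  have a2 : N.arc s y₂ := by
    have := c.chain_q; rw [hq] at this; exact (List.isChain_cons_cons.1 this).1
  exact c.second_ne hp hq ((hwu y₁ a1).trans (hwu y₂ a2).symm)

/-- the children of the split node are exactly the two second nodes -/
lemma RetCycle.arc_from_split (hb : N.Binary) (c : RetCycle N) {s y₁ y₂ : V} {t₁ t₂ : List V}
    (hp : c.p = s :: y₁ :: t₁) (hq : c.q = s :: y₂ :: t₂) {z : V} (hz : N.arc s z) :
    z = y₁ ∨ z = y₂ := by
  have a1 : N.arc s y₁ := by
    have := c.chain_p; rw [hp] at this; exact (List.isChain_cons_cons.1 this).1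
  have a2 : N.arc s y₂ := by
    have := c.chain_q; rw [hq] at this; exact (List.isChain_cons_cons.1 this).1
  obtain ⟨u, w, huw, hu, hw, hcov⟩ :=
    hb.2 s (c.split_not_hybrid hb hp hq) ⟨y₁, a1⟩
  have hne := c.second_ne hp hq
  rcases hcov y₁ a1 with rfl | rfl <;> rcases hcov y₂ a2 with rfl | rfl <;>
    rcases hcov z hz with rfl | rfl <;> tauto

/-- the parents of the hybrid end are exactly the two penultimate nodes -/
lemma RetCycle.arc_to_hend (hb : N.Binary) (c : RetCycle N) {r₁ r₂ : List V} {a₁ a₂ : V}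
    (hp : c.p = r₁ ++ [a₁, c.hend]) (hq : c.q = r₂ ++ [a₂, c.hend]) {z : V}
    (hz : N.arc z c.hend) : z = a₁ ∨ z = a₂ := by
  have a1 : N.arc a₁ c.hend := penult_arc c.chain_p hp
  have a2 : N.arc a₂ c.hend := penult_arc c.chain_q hq
  obtain ⟨u, w, huw, hu, hw, hcov⟩ := hb.1.1 c.hend c.hybrid
  have hne := c.penult_ne hp hq
  rcases hcov a₁ a1 with rfl | rfl <;> rcases hcov a₂ a2 with rfl | rfl <;>
    rcases hcov z hz with rfl | rfl <;> tauto

/-- decompositions of both paths ending at hend -/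
lemma RetCycle.destruct_last (c : RetCycle N) :
    ∃ r₁ a₁ r₂ a₂, c.p = r₁ ++ [a₁, c.hend] ∧ c.q = r₂ ++ [a₂, c.hend] := by
  obtain ⟨r₁, a₁, h1⟩ := exists_penult c.len_p c.last_p
  obtain ⟨r₂, a₂, h2⟩ := exists_penult c.len_q c.last_q
  exact ⟨r₁, a₁, r₂, a₂, h1, h2⟩

end EvoNet

namespace EvoNet
variable {V : Type*} {N : EvoNet V}

lemma exists_path_of_reflTransGen {a b : V} (h : Relation.ReflTransGen N.arc a b) :
    ∃ p : List V, p.Chain' N.arc ∧ p.head? = some a ∧ p.getLast? = some b := by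
  induction h with
  | refl => exact ⟨[a], List.IsChain.singleton a, rfl, rfl⟩
  | @tail b c h1 harc ih =>
    obtain ⟨p, hc, hh, hl⟩ := ih
    have hpne : p ≠ [] := by rintro rfl; simp at hh
    refine ⟨p ++ [c], ?_, ?_, ?_⟩
    · refine List.isChain_append.2 ?_
      exact ⟨hc, by simp, fun x hx y hy => by
        rw [hl] at hx; simp at hx hy; rw [← hx, ← hy]; exact harc⟩
    · rw [List.head?_append_of_ne_nil _ hpne, hh]
    · rw [List.getLast?_append_of_ne_nil _ (by simp)]; simp

lemma suffix_penult {r m : List V} {a v z : V}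
    (heq : ∃ w, r ++ [a, v] = w ++ z :: m) (hm : m ≠ []) :
    ∃ r', z :: m = r' ++ [a, v] := by
  obtain ⟨w, hw⟩ := heq
  have hlast : (z :: m).getLast? = some v := by
    have : (r ++ [a, v]).getLast? = some v := by
      rw [List.getLast?_append_of_ne_nil _ (by simp)]; simp
    rw [hw, List.getLast?_append_of_ne_nil _ (by simp)] at this
    exact this
  have hlen : 2 ≤ (z :: m).length := by
    cases m with
    | nil => exact absurd rfl hm
    | cons b m' => simp [Nat.succ_le_succ, Nat.le_add_left]
  obtain ⟨r', a', hr'⟩ := exists_penult hlen hlast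
  have : r ++ [a, v] = (w ++ r') ++ [a', v] := by rw [hw, hr']; simp
  obtain ⟨ha, -⟩ := penult_eq (rfl : r ++ [a,v] = r ++ [a,v]) this
  exact ⟨r', by rw [hr', ← ha]⟩

/-- every hybrid node is the end of some reticulation cycle -/
lemma exists_retCycle {v : V} (hv : N.IsHybrid v) : ∃ c : RetCycle N, c.hend = v := by
  obtain ⟨u₁, u₂, hu, ha1, ha2⟩ := hv
  suffices H : ∀ n (P Q : List V), P.length + Q.length = n →
      P.Chain' N.arc → Q.Chain' N.arc → P.head? = Q.head? →
      (∃ r, P = r ++ [u₁, v]) → (∃ r, Q = r ++ [u₂, v]) →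
      ∃ c : RetCycle N, c.hend = v by
    obtain ⟨p₁, hc1, hh1, hl1⟩ := exists_path_of_reflTransGen (N.rooted u₁)
    obtain ⟨p₂, hc2, hh2, hl2⟩ := exists_path_of_reflTransGen (N.rooted u₂)
    have hp1 : p₁ ≠ [] := by rintro rfl; simp at hh1
    have hp2 : p₂ ≠ [] := by rintro rfl; simp at hh2
    refine H _ (p₁ ++ [v]) (p₂ ++ [v]) rfl ?_ ?_ ?_ ?_ ?_
    · refine List.isChain_append.2 ?_
      exact ⟨hc1, by simp, fun x hx y hy => by
        rw [hl1] at hx; simp at hx hy; rw [← hx, ← hy]; exact ha1⟩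
    · refine List.isChain_append.2 ?_
      exact ⟨hc2, by simp, fun x hx y hy => by
        rw [hl2] at hx; simp at hx hy; rw [← hx, ← hy]; exact ha2⟩
    · rw [List.head?_append_of_ne_nil _ hp1, List.head?_append_of_ne_nil _ hp2, hh1, hh2]
    · refine ⟨p₁.dropLast, ?_⟩
      have : p₁.getLast (by assumption) = u₁ := by
        rwa [List.getLast_eq_iff_getLast?_eq_some]
      conv_lhs => rw [← List.dropLast_append_getLast hp1, this]
      simp
    · refine ⟨p₂.dropLast, ?_⟩
      have : p₂.getLast (by assumption) = u₂ := by
        rwa [List.getLast_eq_iff_getLast?_eq_some]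
      conv_lhs => rw [← List.dropLast_append_getLast hp2, this]
      simp
  intro n
  induction n using Nat.strong_induction_on with
  | _ n ih =>
    intro P Q hn hcP hcQ hhead ⟨rP, hrP⟩ ⟨rQ, hrQ⟩
    by_cases hdis : ∀ x ∈ interm P, x ∉ interm Q
    · refine ⟨⟨v, P, Q, ⟨by rw [hrP]; simp, hcP⟩, ⟨by rw [hrQ]; simp, hcQ⟩,
        by rw [hrP]; simp, by rw [hrQ]; simp, hhead,
        by rw [hrP, List.getLast?_append_of_ne_nil _ (by simp)]; simp,
        by rw [hrQ, List.getLast?_append_of_ne_nil _ (by simp)]; simp,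
        ⟨u₁, u₂, hu, ha1, ha2⟩, hdis, ?_⟩, rfl⟩
      intro hPQ
      rw [hrP, hrQ] at hPQ
      exact hu (penult_eq hPQ rfl).1.symm
    · push_neg at hdis
      obtain ⟨z, hzP, hzQ⟩ := hdis
      obtain ⟨l₁, m₁, hP, hl₁, hm₁⟩ := interm_split hzP
      obtain ⟨l₂, m₂, hQ, hl₂, hm₂⟩ := interm_split hzQ
      obtain ⟨r₁', hPd⟩ := suffix_penult ⟨l₁, by rw [← hP, hrP]⟩ hm₁
      obtain ⟨r₂', hQd⟩ := suffix_penult ⟨l₂, by rw [← hQ, hrQ]⟩ hm₂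
      refine ih ((z :: m₁).length + (z :: m₂).length) ?_ (z :: m₁) (z :: m₂) rfl
        (hcP.suffix ⟨l₁, hP.symm⟩) (hcQ.suffix ⟨l₂, hQ.symm⟩) rfl ⟨r₁', hPd⟩ ⟨r₂', hQd⟩
      subst hn
      rw [hP, hQ]
      have : 0 < l₁.length := List.length_pos_iff.2 hl₁
      have : 0 < l₂.length := List.length_pos_iff.2 hl₂
      simp only [List.length_append, List.length_cons]
      omega

end EvoNet

namespace EvoNet
variable {V : Type*} {N : EvoNet V}

lemma interm_ne_head? {p : List V} {x a : V} (hc : p.Chain' N.arc)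
    (hx : x ∈ interm p) (hh : p.head? = some a) : x ≠ a := by
  have hpne : p ≠ [] := by rintro rfl; simp at hh
  obtain ⟨b, t, rfl⟩ := List.exists_cons_of_ne_nil hpne
  simp only [List.head?_cons, Option.some.injEq] at hh
  exact hh ▸ interm_ne_head hc hx rfl

lemma interm_append_cases {X Y : List V} (hc : (X ++ Y).Chain' N.arc) (hX : X ≠ []) (hY : Y ≠ [])
    {z : V} (hz : z ∈ interm (X ++ Y)) :
    z ∈ interm X ∨ X.getLast? = some z ∨ z ∈ interm Y ∨ Y.head? = some z := by
  rcases List.mem_append.1 (mem_of_interm hz) with hzX | hzY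
  · rcases mem_path_cases hX (List.getLast?_eq_getLast hX) hzX with h1 | h2 | h3
    · exfalso
      refine interm_ne_head? hc hz ?_ rfl
      rw [List.head?_append_of_ne_nil _ hX, h1]
    · exact Or.inl h2
    · exact Or.inr (Or.inl (by rw [List.getLast?_eq_getLast hX, h3]))
  · rcases mem_path_cases hY (List.getLast?_eq_getLast hY) hzY with h1 | h2 | h3
    · exact Or.inr (Or.inr (Or.inr h1))
    · exact Or.inr (Or.inr (Or.inl h2))
    · exfalso
      refine interm_ne_getLast hc hz ?_ rfl
      rw [List.getLast?_append_of_ne_nil _ hY, List.getLast?_eq_getLast hY, h3]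

/-- helper to package a RetCycle -/
def mkCycle (h : V) (A B : List V) (hcA : A.Chain' N.arc) (hcB : B.Chain' N.arc)
    (hlA : 2 ≤ A.length) (hlB : 2 ≤ B.length) (hhead : A.head? = B.head?)
    (hlastA : A.getLast? = some h) (hlastB : B.getLast? = some h) (hhyb : N.IsHybrid h)
    (hdis : ∀ x ∈ interm A, x ∉ interm B) (hne : A ≠ B) : RetCycle N :=
  ⟨h, A, B, ⟨by rintro rfl; simp at hlA, hcA⟩, ⟨by rintro rfl; simp at hlB, hcB⟩,
    hlA, hlB, hhead, hlastA, hlastB, hhyb, hdis, hne⟩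

lemma one_nested_p_p (h1n : N.OneNested) {c₁ c₂ : RetCycle N} (hne : c₁.hend ≠ c₂.hend)
    {x : V} (h1 : x ∈ interm c₁.p ∨ x ∈ interm c₁.q) (h2 : x ∈ interm c₂.p ∨ x ∈ interm c₂.q) :
    False :=
  h1n c₁ c₂ hne x (by rcases h1 with h | h
                      exacts [Set.mem_union_left _ h, Set.mem_union_right _ h])
    (by rcases h2 with h | h
        exacts [Set.mem_union_left _ h, Set.mem_union_right _ h])

end EvoNet

namespace EvoNet
variable {V : Type*} {N : EvoNet V}

lemma ne_of_penult_ne {A B rA rB : List V} {u v h h' : V} (hA : A = rA ++ [u, h])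
    (hB : B = rB ++ [v, h']) (huv : u ≠ v) : A ≠ B := by
  rintro rfl
  exact huv (penult_eq hA hB).1

/-- KEY LEMMA: in a binary 1-nested network, no intermediate node of the first path
of a reticulation cycle is hybrid. -/
lemma no_hybrid_interm_p (hb : N.Binary) (h1n : N.OneNested) (c : RetCycle N) {w : V}
    (hw : w ∈ interm c.p) (hwh : N.IsHybrid w) : False := by
  classical
  obtain ⟨α, β, hcp, hα, hβ⟩ := interm_split hw
  obtain ⟨b₀, βt, hβ0⟩ := List.exists_cons_of_ne_nil hβ
  obtain ⟨r₁, a₁, r₂, a₂, hcp1, hcq1⟩ := c.destruct_last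
  have ha12 : a₁ ≠ a₂ := c.penult_ne hcp1 hcq1
  rcases List.eq_nil_or_concat α with rfl | ⟨α', x, rfl⟩
  · exact hα rfl
  rw [List.concat_eq_append] at hcp
  have axw : N.arc x w := by
    have hc := c.chain_p
    rw [hcp] at hc
    exact (List.isChain_append.1 hc).2.2 x (by simp) w rfl
  have whne : w ≠ c.hend := interm_ne_getLast c.chain_p hw c.last_p
  have arcwb : N.arc w b₀ := by
    have hc := c.chain_p
    rw [hcp, hβ0, show (α' ++ [x]) ++ w :: b₀ :: βt = ((α' ++ [x]) ++ [w]) ++ b₀ :: βt by simp] at hc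
    exact (List.isChain_append.1 hc).2.2 w (by simp) b₀ rfl
  have hβlast : β.getLast? = some c.hend := by
    have := c.last_p
    rw [hcp, show (α' ++ [x]) ++ w :: β = ((α' ++ [x]) ++ [w]) ++ β by simp,
      List.getLast?_append_of_ne_nil _ hβ] at this
    exact this
  have chainβ : β.Chain' N.arc := c.chain_p.suffix ⟨(α' ++ [x]) ++ [w], by rw [hcp]; simp⟩
  have hβsub : ∀ z ∈ interm β, z ∈ interm c.p := by
    intro z hz
    obtain ⟨l, m, hsp, hl, hm⟩ := interm_split hz
    rw [hcp, hsp, show (α' ++ [x]) ++ w :: (l ++ z :: m) = ((α' ++ [x]) ++ w :: l) ++ z :: m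
      by simp]
    exact split_interm (by simp) hm
  have hβhead : ∀ z, β.head? = some z → z = c.hend ∨ z ∈ interm c.p := by
    intro z hz
    rw [hβ0] at hz
    cases hz
    rcases List.eq_nil_or_concat βt with rfl | ⟨βt', y, hβt⟩
    · left
      rw [hβ0] at hβlast; simpa using hβlast
    · right
      rw [hcp, hβ0, show (α' ++ [x]) ++ w :: b₀ :: βt = ((α' ++ [x]) ++ [w]) ++ b₀ :: βt by simp]
      exact split_interm (by simp) (by rw [hβt]; simp)
  have hpenB : ∀ Z : List V, Z.getLast? = some w → ∃ rB, Z ++ β = rB ++ [a₁, c.hend] := by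
    intro Z hZ
    have hZne : Z ≠ [] := by rintro rfl; simp at hZ
    have hZd : Z = Z.dropLast ++ [w] := by
      conv_lhs => rw [← List.dropLast_append_getLast hZne]
      rw [List.getLast?_eq_getLast hZne, Option.some_inj] at hZ
      rw [hZ]
    rcases List.eq_nil_or_concat βt with rfl | ⟨βt', y, hβt⟩
    · have hb0 : b₀ = c.hend := by
        rw [hβ0] at hβlast; simpa using hβlast
      have haw : a₁ = w := by
        have h2 : c.p = (α' ++ [x]) ++ [w, c.hend] := by rw [hcp, hβ0, hb0]; try simp
        exact (penult_eq hcp1 h2).1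
      refine ⟨Z.dropLast, ?_⟩
      rw [hβ0, hb0, haw]
      conv_lhs => rw [hZd]
      simp
    · obtain ⟨rβ, hrβ⟩ := suffix_penult (r := r₁) (a := a₁) (v := c.hend) (z := b₀) (m := βt)
        ⟨(α' ++ [x]) ++ [w], by rw [← hcp1, hcp, hβ0]; simp⟩ (by rw [hβt]; simp)
      rw [← hβ0] at hrβ
      exact ⟨Z ++ rβ, by rw [hrβ]; simp⟩
  obtain ⟨E, rP, rQ, π', hEh, hEp, hEq, hπx⟩ :
      ∃ (E : RetCycle N) (rP rQ : List V) (π' : V),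
        E.hend = w ∧ E.p = rP ++ [x, w] ∧ E.q = rQ ++ [π', w] ∧ π' ≠ x := by
    obtain ⟨E₀, hE₀⟩ := exists_retCycle hwh
    obtain ⟨rP₀, πP, rQ₀, πQ, hEp₀, hEq₀⟩ := E₀.destruct_last
    have hPQ : πP ≠ πQ := E₀.penult_ne hEp₀ hEq₀
    rcases E₀.arc_to_hend hb hEp₀ hEq₀ (z := x) (by rw [hE₀]; exact axw) with rfl | rfl
    · exact ⟨E₀, rP₀, rQ₀, πQ, hE₀, by rw [hEp₀, hE₀], by rw [hEq₀, hE₀], hPQ.symm⟩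
    · exact ⟨E₀.swap, rQ₀, rP₀, πP, hE₀, by rw [E₀.swap_p, hEq₀, hE₀],
        by rw [E₀.swap_q, hEp₀, hE₀], hPQ⟩
  have hEne : E.hend ≠ c.hend := by rw [hEh]; exact whne
  have hEplast : E.p.getLast? = some w := by rw [hEp, getLast?_split]; simp
  have hEqlast : E.q.getLast? = some w := by rw [hEq, getLast?_split]; simp
  have hEqne : E.q ≠ [] := E.isPath_q.1
  have hπint : rQ ≠ [] → π' ∈ interm E.q := by
    intro h; rw [hEq]; exact split_interm h (by simp)
  rcases List.eq_nil_or_concat rP with rfl | ⟨rP', xlast, hrPd⟩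
  · -- case B: E.p = [x, w], head of E.q is x
    have hEqhead : E.q.head? = some x := by
      rw [← E.same_origin, hEp]; simp
    have hrQne : rQ ≠ [] := by
      rintro rfl
      rw [hEq] at hEqhead
      simp at hEqhead
      exact hπx hEqhead
    have hπ'int : π' ∈ interm E.q := hπint hrQne
    have chainEqβ : (E.q ++ β).Chain' N.arc := by
      refine List.isChain_append.2 ?_
      refine ⟨E.chain_q, chainβ, ?_⟩
      intro a ha y hy
      rw [hEqlast] at ha; cases ha
      rw [hβ0] at hy; cases hy
      exact arcwb
    have hlastEqβ : (E.q ++ β).getLast? = some c.hend := by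
      rw [List.getLast?_append_of_ne_nil _ hβ]; exact hβlast
    obtain ⟨rB, hrB⟩ := hpenB E.q hEqlast
    -- disjointness analysis for interm (E.q ++ β)
    have hBan : ∀ z, z ∈ interm (E.q ++ β) → z ∈ interm E.q ∨ z ∈ interm c.p := by
      intro z hz
      rcases interm_append_cases chainEqβ hEqne hβ hz with h1 | h2 | h3 | h4
      · exact Or.inl h1
      · rw [hEqlast] at h2; cases h2
        exact Or.inr hw
      · exact Or.inr (hβsub z h3)
      · rcases hβhead z h4 with rfl | h5
        · exact absurd (interm_ne_getLast chainEqβ hz hlastEqβ) (by simp)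
        · exact Or.inr h5
    rcases List.eq_nil_or_concat α' with rfl | ⟨α'', z₀, hα'd⟩
    · -- subcase B2 : c.p = x :: w :: β ; D = (c.q, E.q ++ β)
      have hcqhead : c.q.head? = some x := by
        rw [← c.same_origin, hcp]; simp
      have hheadD : c.q.head? = (E.q ++ β).head? := by
        rw [hcqhead, List.head?_append_of_ne_nil _ hEqne, hEqhead]
      have hdisD : ∀ z, z ∈ interm c.q → z ∉ interm (E.q ++ β) := by
        intro z hzq hzB
        rcases hBan z hzB with h1 | h2
        · exact one_nested_p_p h1n hEne (Or.inr h1) (Or.inr hzq)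
        · exact c.intDisjoint z h2 hzq
      let D : RetCycle N := mkCycle c.hend c.q (E.q ++ β) c.chain_q chainEqβ c.len_q
        (le_trans E.len_q (by simp)) hheadD c.last_q hlastEqβ c.hybrid hdisD
        (ne_of_penult_ne hcq1 hrB ha12.symm)
      refine one_nested_p_p h1n (c₁ := E) (c₂ := D) hEne (x := π') (Or.inr hπ'int) ?_
      right
      show π' ∈ interm (E.q ++ β)
      rw [hEq, show (rQ ++ [π', w]) ++ β = rQ ++ π' :: (w :: β) by simp]
      exact split_interm hrQne (by simp)
    · -- subcase B1 : α' ≠ [] ; D = (α' ++ E.q ++ β, c.q)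
      have hα'ne : α' ≠ [] := by rw [hα'd]; simp
      have arcα'x : ∀ a, α'.getLast? = some a → N.arc a x := by
        intro a ha
        have hc := c.chain_p
        rw [hcp, show (α' ++ [x]) ++ w :: β = α' ++ (x :: w :: β) by simp] at hc
        exact (List.isChain_append.1 hc).2.2 a ha x rfl
      have hxintc : x ∈ interm c.p := by
        rw [hcp, show (α' ++ [x]) ++ w :: β = α' ++ (x :: (w :: β)) by simp]
        exact split_interm hα'ne (by simp)
      have chainA : (α' ++ (E.q ++ β)).Chain' N.arc := by
        refine List.isChain_append.2 ?_
        refine ⟨c.chain_p.prefix ⟨x :: w :: β, by rw [hcp]; simp⟩, chainEqβ, ?_⟩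
        intro a ha y hy
        rw [List.head?_append_of_ne_nil _ hEqne, hEqhead] at hy
        cases hy
        exact arcα'x a ha
      have hheadA : (α' ++ (E.q ++ β)).head? = c.q.head? := by
        rw [List.head?_append_of_ne_nil _ hα'ne, ← c.same_origin, hcp,
          List.head?_append_of_ne_nil _ (by simp : α' ++ [x] ≠ []),
          List.head?_append_of_ne_nil _ hα'ne]
      have hlastA : (α' ++ (E.q ++ β)).getLast? = some c.hend := by
        rw [List.getLast?_append_of_ne_nil _ (by simp [hβ0] : E.q ++ β ≠ []), hlastEqβ]
      obtain ⟨rB, hrB⟩ := hpenB E.q hEqlast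
      have hA1 : α' ++ (E.q ++ β) = (α' ++ rB) ++ [a₁, c.hend] := by rw [hrB]; simp
      have hα'sub : ∀ z, z ∈ α' → z ∈ interm c.p ∨ c.p.head? = some z := by
        intro z hz
        obtain ⟨l, m, hsp⟩ := List.append_of_mem hz
        rcases List.eq_nil_or_concat' l with rfl | ⟨l', u, rfl⟩
        · right; rw [hcp, hsp]; simp
        · left
          rw [hcp, hsp, show (((l' ++ [u]) ++ z :: m) ++ [x]) ++ w :: β =
            (l' ++ [u]) ++ z :: (m ++ [x] ++ w :: β) by simp]
          exact split_interm (by simp) (by simp)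
      have hdisA : ∀ z, z ∈ interm (α' ++ (E.q ++ β)) → z ∉ interm c.q := by
        intro z hzA hzq
        rcases interm_append_cases chainA hα'ne (by simp [hβ0]) hzA with h1 | h2 | h3 | h4
        · rcases hα'sub z (mem_of_interm h1) with h5 | h5
          · exact c.intDisjoint z h5 hzq
          · exact interm_ne_head? c.chain_q hzq (c.same_origin ▸ h5) rfl
        · rcases hα'sub z (mem_of_getLast?_eq h2) with h5 | h5
          · exact c.intDisjoint z h5 hzq
          · exact interm_ne_head? c.chain_q hzq (c.same_origin ▸ h5) rfl
        · rcases hBan z h3 with h5 | h5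
          · exact one_nested_p_p h1n hEne (Or.inr h5) (Or.inr hzq)
          · exact c.intDisjoint z h5 hzq
        · rw [List.head?_append_of_ne_nil _ hEqne, hEqhead] at h4
          cases h4
          exact c.intDisjoint x hxintc hzq
      let D : RetCycle N := mkCycle c.hend (α' ++ (E.q ++ β)) c.q chainA c.chain_q
        (le_trans E.len_q (by simp only [List.length_append]; omega)) c.len_q hheadA hlastA c.last_q c.hybrid hdisA
        (ne_of_penult_ne hA1 hcq1 ha12)
      refine one_nested_p_p h1n (c₁ := E) (c₂ := D) hEne (x := π') (Or.inr hπ'int) ?_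
      left
      show π' ∈ interm (α' ++ (E.q ++ β))
      rw [hEq, show α' ++ ((rQ ++ [π', w]) ++ β) = (α' ++ rQ) ++ π' :: (w :: β) by simp]
      exact split_interm (by simp [hα'ne]) (by simp)
  · -- case A: rP ≠ []
    have hrPne : rP ≠ [] := by rw [hrPd]; simp
    have hxint : x ∈ interm E.p := by
      rw [hEp]; exact split_interm hrPne (by simp)
    rcases List.eq_nil_or_concat α' with rfl | ⟨α'', z₀, hα'd⟩
    · -- subcase A2 : c.p = x :: w :: β ; D = (rP ++ c.q, E.q ++ β)
      have hcpx : c.p = x :: w :: β := by rw [hcp]; simp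
      have hcqhead : c.q.head? = some x := by rw [← c.same_origin, hcpx]; simp
      have harcrPx : ∀ a, rP.getLast? = some a → N.arc a x := by
        intro a ha
        have hc := E.chain_p
        rw [hEp] at hc
        exact (List.isChain_append.1 hc).2.2 a ha x rfl
      have chainA : (rP ++ c.q).Chain' N.arc := by
        refine List.isChain_append.2 ?_
        refine ⟨E.chain_p.prefix ⟨[x, w], by rw [hEp]⟩, c.chain_q, ?_⟩
        intro a ha y hy
        rw [hcqhead] at hy
        cases hy
        exact harcrPx a ha
      have chainB : (E.q ++ β).Chain' N.arc := by
        refine List.isChain_append.2 ?_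
        refine ⟨E.chain_q, chainβ, ?_⟩
        intro a ha y hy
        rw [hEqlast] at ha; cases ha
        rw [hβ0] at hy; cases hy
        exact arcwb
      have hlastB : (E.q ++ β).getLast? = some c.hend := by
        rw [List.getLast?_append_of_ne_nil _ hβ]; exact hβlast
      have hheadA : (rP ++ c.q).head? = (E.q ++ β).head? := by
        rw [List.head?_append_of_ne_nil _ hrPne, List.head?_append_of_ne_nil _ hEqne,
          ← E.same_origin, hEp, List.head?_append_of_ne_nil _ hrPne]
      have hlastA : (rP ++ c.q).getLast? = some c.hend := by
        rw [List.getLast?_append_of_ne_nil _ c.isPath_q.1]; exact c.last_q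
      obtain ⟨rB, hrB⟩ := hpenB E.q hEqlast
      have hA1 : rP ++ c.q = (rP ++ r₂) ++ [a₂, c.hend] := by rw [hcq1]; simp
      have hBan : ∀ z, z ∈ interm (E.q ++ β) → z ∈ interm E.q ∨ z ∈ interm c.p := by
        intro z hz
        rcases interm_append_cases chainB hEqne hβ hz with h1 | h2 | h3 | h4
        · exact Or.inl h1
        · rw [hEqlast] at h2; cases h2
          exact Or.inr hw
        · exact Or.inr (hβsub z h3)
        · rcases hβhead z h4 with rfl | h5
          · exact absurd (interm_ne_getLast chainB hz hlastB) (by simp)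
          · exact Or.inr h5
      have hrPsub : ∀ z, z ∈ rP → z ∈ interm E.p ∨ E.p.head? = some z := by
        intro z hz
        obtain ⟨l, m, hsp⟩ := List.append_of_mem hz
        rcases List.eq_nil_or_concat' l with rfl | ⟨l', u, rfl⟩
        · right; rw [hEp, hsp]; simp
        · left
          rw [hEp, hsp, show (((l' ++ [u]) ++ z :: m) ++ [x, w]) =
            (l' ++ [u]) ++ z :: (m ++ [x, w]) by simp]
          exact split_interm (by simp) (by simp)
      have hdisA : ∀ z, z ∈ interm (rP ++ c.q) → z ∉ interm (E.q ++ β) := by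
        intro z hzA hzB
        have hzA' : z ∈ interm E.p ∨ z ∈ interm c.q := by
          rcases interm_append_cases chainA hrPne c.isPath_q.1 hzA with h1 | h2 | h3 | h4
          · rcases hrPsub z (mem_of_interm h1) with h5 | h5
            · exact Or.inl h5
            · rw [hEp, List.head?_append_of_ne_nil _ hrPne] at h5
              exact absurd rfl (interm_ne_head? chainA hzA
                (by rw [List.head?_append_of_ne_nil _ hrPne]; exact h5)).symm
          · rcases hrPsub z (mem_of_getLast?_eq h2) with h5 | h5
            · exact Or.inl h5
            · rw [hEp, List.head?_append_of_ne_nil _ hrPne] at h5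
              exact absurd rfl (interm_ne_head? chainA hzA
                (by rw [List.head?_append_of_ne_nil _ hrPne]; exact h5)).symm
          · exact Or.inr h3
          · rw [hcqhead] at h4; cases h4
            exact Or.inl hxint
        rcases hzA' with h1 | h1 <;> rcases hBan z hzB with h2 | h2
        · exact E.intDisjoint z h1 h2
        · exact one_nested_p_p h1n hEne (Or.inl h1) (Or.inl h2)
        · exact one_nested_p_p h1n hEne (Or.inr h2) (Or.inr h1)
        · exact c.intDisjoint z h2 h1
      let D : RetCycle N := mkCycle c.hend (rP ++ c.q) (E.q ++ β) chainA chainB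
        (le_trans c.len_q (by simp)) (le_trans E.len_q (by simp)) hheadA hlastA hlastB
        c.hybrid hdisA (ne_of_penult_ne hA1 hrB ha12.symm)
      refine one_nested_p_p h1n (c₁ := E) (c₂ := D) hEne (x := x) (Or.inl hxint) ?_
      left
      show x ∈ interm (rP ++ c.q)
      obtain ⟨qh, qt, hq⟩ := List.exists_cons_of_ne_nil c.isPath_q.1
      have : qh = x := by rw [hq] at hcqhead; simpa using hcqhead
      subst this
      rw [hq]
      refine split_interm hrPne (by rintro h; rw [h] at hq; have := c.len_q; rw [hq] at this; simp at this)
    · -- subcase A1 : α' ≠ [] : x ∈ interm c.p, direct contradiction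
      have hα'ne : α' ≠ [] := by rw [hα'd]; simp
      have hxintc : x ∈ interm c.p := by
        rw [hcp, show (α' ++ [x]) ++ w :: β = α' ++ (x :: (w :: β)) by simp]
        exact split_interm hα'ne (by simp)
      exact one_nested_p_p h1n hEne (Or.inl hxint) (Or.inl hxintc)

end EvoNet

namespace EvoNet
variable {V : Type*} {N : EvoNet V}

lemma no_hybrid_interm (hb : N.Binary) (h1n : N.OneNested) (c : RetCycle N) {w : V}
    (hw : w ∈ c.intermNodes) (hwh : N.IsHybrid w) : False := by
  rcases hw with hw | hw
  · exact no_hybrid_interm_p hb h1n c hw hwh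
  · exact no_hybrid_interm_p hb h1n c.swap hw hwh

lemma posClash (hb : N.Binary) (h1n : N.OneNested) (c₁ c₂ : RetCycle N)
    (hne : c₁.hend ≠ c₂.hend) {y : V}
    (h1 : y ∈ c₁.intermNodes ∨ y = c₁.hend) (h2 : y ∈ c₂.intermNodes ∨ y = c₂.hend) : False := by
  rcases h1 with h1 | rfl <;> rcases h2 with h2 | h2
  · exact h1n c₁ c₂ hne y h1 h2
  · exact no_hybrid_interm hb h1n c₁ h1 (h2 ▸ c₂.hybrid)
  · exact no_hybrid_interm hb h1n c₂ h2 c₁.hybrid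
  · exact hne h2

lemma head?_eq_head {p : List V} {a : V} (h : p.head? = some a) : ∃ t, p = a :: t := by
  cases p with
  | nil => simp at h
  | cons b t => simp only [List.head?_cons, Option.some.injEq] at h; exact ⟨t, by rw [h]⟩

lemma arc_of_split {p l m : List V} {x y : V} (hc : p.Chain' N.arc)
    (hp : p = l ++ x :: y :: m) : N.arc x y :=
  (List.isChain_cons_cons.1 (hc.suffix ⟨l, hp.symm⟩)).1

lemma second_pos' {r : List V} {s y hh : V} {t : List V} (hr : r = s :: y :: t)
    (hlast : r.getLast? = some hh) : y ∈ interm r ∨ y = hh := by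
  cases t with
  | nil => right; rw [hr] at hlast; simpa using hlast
  | cons b t' => left; rw [hr]; exact split_interm (l := [s]) (by simp) (by simp)

lemma node_pos (c : RetCycle N) {x : V} (hx : x ∈ c.nodes) :
    c.p.head? = some x ∨ x ∈ c.intermNodes ∨ x = c.hend := by
  rcases hx with hx | hx
  · rcases mem_path_cases c.isPath_p.1 c.last_p hx with h | h | h
    · exact Or.inl h
    · exact Or.inr (Or.inl (Set.mem_union_left _ h))
    · exact Or.inr (Or.inr h)
  · rcases mem_path_cases c.isPath_q.1 c.last_q hx with h | h | h
    · exact Or.inl (c.same_origin.trans h)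
    · exact Or.inr (Or.inl (Set.mem_union_right _ h))
    · exact Or.inr (Or.inr h)

/-- the position of the node after an intermediate node -/
lemma interm_succ (c : RetCycle N) {r : List V} (hr : r = c.p ∨ r = c.q) {x : V}
    (hx : x ∈ interm r) : ∃ y, N.arc x y ∧ (y ∈ c.intermNodes ∨ y = c.hend) := by
  have hchain : r.Chain' N.arc := by rcases hr with rfl | rfl; exacts [c.chain_p, c.chain_q]
  have hlast : r.getLast? = some c.hend := by rcases hr with rfl | rfl; exacts [c.last_p, c.last_q]
  have hsub : interm r ⊆ c.intermNodes := by
    rcases hr with rfl | rfl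
    exacts [Set.subset_union_left, Set.subset_union_right]
  obtain ⟨l, m, hsp, hl, hm⟩ := interm_split hx
  obtain ⟨y, m', rfl⟩ := List.exists_cons_of_ne_nil hm
  refine ⟨y, arc_of_split hchain hsp, ?_⟩
  cases m' with
  | nil =>
    right
    rw [hsp, show l ++ [x, y] = (l ++ [x]) ++ [y] by simp,
      List.getLast?_append_of_ne_nil _ (by simp)] at hlast
    simpa using hlast
  | cons b m'' =>
    left
    refine hsub ?_
    rw [hsp, show l ++ x :: y :: b :: m'' = (l ++ [x]) ++ y :: (b :: m'') by simp]
    exact split_interm (by simp) (by simp)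

/-- main lemma, different hybrid ends -/
lemma diff_hend (hb : N.Binary) (h1n : N.OneNested) (c₁ c₂ : RetCycle N)
    (hne : c₁.hend ≠ c₂.hend) {x : V} (hx1 : x ∈ c₁.nodes) (hx2 : x ∈ c₂.nodes) : False := by
  obtain ⟨s₁, y₁, t₁, y₁', t₁', hp₁, hq₁⟩ := c₁.destruct
  obtain ⟨s₂, y₂, t₂, y₂', t₂', hp₂, hq₂⟩ := c₂.destruct
  -- positions of a second node of cycle c in the cycle
  have hsecond₁ : ∀ z, N.arc s₁ z → z ∈ c₁.intermNodes ∨ z = c₁.hend := by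
    intro z hz
    rcases c₁.arc_from_split hb hp₁ hq₁ hz with rfl | rfl
    · rcases second_pos' hp₁ c₁.last_p with h | h
      · exact Or.inl (Set.mem_union_left _ h)
      · exact Or.inr h
    · rcases second_pos' hq₁ c₁.last_q with h | h
      · exact Or.inl (Set.mem_union_right _ h)
      · exact Or.inr h
  have hsecond₂ : ∀ z, N.arc s₂ z → z ∈ c₂.intermNodes ∨ z = c₂.hend := by
    intro z hz
    rcases c₂.arc_from_split hb hp₂ hq₂ hz with rfl | rfl
    · rcases second_pos' hp₂ c₂.last_p with h | h
      · exact Or.inl (Set.mem_union_left _ h)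
      · exact Or.inr h
    · rcases second_pos' hq₂ c₂.last_q with h | h
      · exact Or.inl (Set.mem_union_right _ h)
      · exact Or.inr h
  rcases node_pos c₁ hx1 with h1 | h1 <;> rcases node_pos c₂ hx2 with h2 | h2
  · -- x is the split of both cycles
    rw [hp₁] at h1; rw [hp₂] at h2
    simp only [List.head?_cons, Option.some.injEq] at h1 h2
    subst h1; subst h2
    have harc : N.arc s₂ y₂ := arc_of_split c₂.chain_p (l := []) (by rw [hp₂]; rfl)
    rcases hsecond₁ y₂ harc with hy1 | hy1 <;>
      rcases second_pos' hp₂ c₂.last_p with hy2 | hy2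
    · exact posClash hb h1n c₁ c₂ hne (Or.inl hy1) (Or.inl (Set.mem_union_left _ hy2))
    · exact posClash hb h1n c₁ c₂ hne (Or.inl hy1) (Or.inr hy2)
    · exact posClash hb h1n c₁ c₂ hne (Or.inr hy1) (Or.inl (Set.mem_union_left _ hy2))
    · exact posClash hb h1n c₁ c₂ hne (Or.inr hy1) (Or.inr hy2)
  · -- x is the split of c₁, and intermediate or hend in c₂
    rw [hp₁] at h1
    simp only [List.head?_cons, Option.some.injEq] at h1
    subst h1
    rcases h2 with h2 | h2
    · -- split of c₁ is an intermediate node of c₂: look at its successor there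
      have h2' : s₁ ∈ interm c₂.p ∨ s₁ ∈ interm c₂.q := h2
      have : ∃ r, (r = c₂.p ∨ r = c₂.q) ∧ s₁ ∈ interm r := by
        rcases h2' with h | h
        exacts [⟨c₂.p, Or.inl rfl, h⟩, ⟨c₂.q, Or.inr rfl, h⟩]
      obtain ⟨r, hr, hxr⟩ := this
      obtain ⟨y, hxy, hy2⟩ := interm_succ c₂ hr hxr
      rcases hsecond₁ y hxy with hy1 | hy1 <;> rcases hy2 with hy2 | hy2
      · exact posClash hb h1n c₁ c₂ hne (Or.inl hy1) (Or.inl hy2)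
      · exact posClash hb h1n c₁ c₂ hne (Or.inl hy1) (Or.inr hy2)
      · exact posClash hb h1n c₁ c₂ hne (Or.inr hy1) (Or.inl hy2)
      · exact posClash hb h1n c₁ c₂ hne (Or.inr hy1) (Or.inr hy2)
    · -- split of c₁ equals hend of c₂: tree node vs hybrid
      exact c₁.split_not_hybrid hb hp₁ hq₁ (h2 ▸ c₂.hybrid)
  · -- symmetric: x is split of c₂
    rw [hp₂] at h2
    simp only [List.head?_cons, Option.some.injEq] at h2
    subst h2
    rcases h1 with h1 | h1
    · have h1' : s₂ ∈ interm c₁.p ∨ s₂ ∈ interm c₁.q := h1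
      have : ∃ r, (r = c₁.p ∨ r = c₁.q) ∧ s₂ ∈ interm r := by
        rcases h1' with h | h
        exacts [⟨c₁.p, Or.inl rfl, h⟩, ⟨c₁.q, Or.inr rfl, h⟩]
      obtain ⟨r, hr, hxr⟩ := this
      obtain ⟨y, hxy, hy1⟩ := interm_succ c₁ hr hxr
      rcases hsecond₂ y hxy with hy2 | hy2 <;> rcases hy1 with hy1 | hy1
      · exact posClash hb h1n c₁ c₂ hne (Or.inl hy1) (Or.inl hy2)
      · exact posClash hb h1n c₁ c₂ hne (Or.inr hy1) (Or.inl hy2)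
      · exact posClash hb h1n c₁ c₂ hne (Or.inl hy1) (Or.inr hy2)
      · exact posClash hb h1n c₁ c₂ hne (Or.inr hy1) (Or.inr hy2)
    · exact c₂.split_not_hybrid hb hp₂ hq₂ (h1 ▸ c₁.hybrid)
  · exact posClash hb h1n c₁ c₂ hne h1 h2

end EvoNet

namespace EvoNet
variable {V : Type*} {N : EvoNet V}

/-- Two distinct chains with the same final two entries either disagree somewhere
(creating a hybrid node intermediate in both) or one is a proper suffix of the other. -/
lemma disagree {t₁ t₂ : List V} {r r' : List V} {a hh : V}
    (hc₁ : t₁.Chain' N.arc) (hc₂ : t₂.Chain' N.arc)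
    (h1 : t₁ = r ++ [a, hh]) (h2 : t₂ = r' ++ [a, hh]) (hne : t₁ ≠ t₂) :
    (∃ v u₁ u₂, v ∈ interm t₁ ∧ v ∈ interm t₂ ∧ u₁ ≠ u₂ ∧ N.arc u₁ v ∧ N.arc u₂ v) ∨
    (∃ d, d ≠ [] ∧ t₂ = d ++ t₁) ∨ (∃ d, d ≠ [] ∧ t₁ = d ++ t₂) := by
  have hrev : t₁.reverse ≠ t₂.reverse := fun h => hne (by
    rw [← List.reverse_reverse t₁, h, List.reverse_reverse])
  have hr1 : t₁.reverse = hh :: a :: r.reverse := by rw [h1]; simp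
  have hr2 : t₂.reverse = hh :: a :: r'.reverse := by rw [h2]; simp
  rcases list_diff t₁.reverse t₂.reverse hrev with ⟨d, hd, hps⟩ | ⟨d, hd, hps⟩ |
    ⟨c, u₁, u₂, d₁, d₂, hu, hsp1, hsp2⟩
  · right; left
    refine ⟨d.reverse, by simpa using hd, ?_⟩
    rw [← List.reverse_reverse t₂, hps]
    simp
  · right; right
    refine ⟨d.reverse, by simpa using hd, ?_⟩
    rw [← List.reverse_reverse t₁, hps]
    simp
  · left
    rcases c with _ | ⟨e₁, _ | ⟨e₂, c'⟩⟩
    · exfalso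
      rw [hr1] at hsp1; rw [hr2] at hsp2
      simp only [List.nil_append, List.cons.injEq] at hsp1 hsp2
      exact hu (hsp1.1.symm.trans hsp2.1)
    · exfalso
      rw [hr1] at hsp1; rw [hr2] at hsp2
      simp only [List.cons_append, List.nil_append, List.cons.injEq] at hsp1 hsp2
      exact hu (hsp1.2.1.symm.trans hsp2.2.1)
    · set c : List V := e₁ :: e₂ :: c' with hc
      have hcne : c ≠ [] := by simp [hc]
      have hdl : c = c.dropLast ++ [c.getLast hcne] := (List.dropLast_append_getLast hcne).symm
      have hdlne : c.dropLast ≠ [] := by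
        rw [hc]
        cases c' <;> simp [List.dropLast]
      set v : V := c.getLast hcne with hv
      have ht1 : t₁ = (d₁.reverse ++ [u₁]) ++ v :: c.dropLast.reverse := by
        rw [← List.reverse_reverse t₁, hsp1]
        conv_lhs => rw [hdl]
        simp
      have ht2 : t₂ = (d₂.reverse ++ [u₂]) ++ v :: c.dropLast.reverse := by
        rw [← List.reverse_reverse t₂, hsp2]
        conv_lhs => rw [hdl]
        simp
      refine ⟨v, u₁, u₂, ?_, ?_, hu, ?_, ?_⟩
      · rw [ht1]; exact split_interm (by simp) (by simpa using hdlne)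
      · rw [ht2]; exact split_interm (by simp) (by simpa using hdlne)
      · exact arc_of_split hc₁ (l := d₁.reverse) (m := c.dropLast.reverse) (by rw [ht1]; simp)
      · exact arc_of_split hc₂ (l := d₂.reverse) (m := c.dropLast.reverse) (by rw [ht2]; simp)

lemma same_hend_matched (hb : N.Binary) (h1n : N.OneNested) (c₁ c₂ : RetCycle N)
    (hh : c₁.hend = c₂.hend) {r₁ r₂ r₃ r₄ : List V} {a b : V}
    (hp1 : c₁.p = r₁ ++ [a, c₁.hend]) (hq1 : c₁.q = r₂ ++ [b, c₁.hend])
    (hp2 : c₂.p = r₃ ++ [a, c₁.hend]) (hq2 : c₂.q = r₄ ++ [b, c₁.hend])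
    (hnePQ : ¬ (c₁.p = c₂.p ∧ c₁.q = c₂.q)) : False := by
  obtain ⟨s₁, y₁, t₁, y₁', t₁', hp₁d, hq₁d⟩ := c₁.destruct
  obtain ⟨s₂, y₂, t₂, y₂', t₂', hp₂d, hq₂d⟩ := c₂.destruct
  by_cases hpp : c₁.p = c₂.p
  · have hqq : c₁.q ≠ c₂.q := fun h => hnePQ ⟨hpp, h⟩
    rcases disagree c₁.chain_q c₂.chain_q hq1 hq2 hqq with
      ⟨v, u₁, u₂, hv1, hv2, hu, ha1, ha2⟩ | ⟨d, hd, hsuf⟩ | ⟨d, hd, hsuf⟩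
    · exact no_hybrid_interm hb h1n c₁ (Set.mem_union_right _ hv1) ⟨u₁, u₂, hu, ha1, ha2⟩
    · -- c₂.q = d ++ c₁.q, but they have the same head s₁ = s₂
      have hs : s₁ = s₂ := by
        have e1 : c₁.p.head? = some s₁ := by rw [hp₁d]; simp
        have e2 : c₂.p.head? = some s₂ := by rw [hp₂d]; simp
        rw [hpp, e2] at e1
        exact (Option.some_inj.1 e1).symm
      have hint : s₁ ∈ interm c₂.q := by
        rw [hsuf, hq₁d]
        exact split_interm hd (by simp)
      exact interm_ne_head? c₂.chain_q hint (by rw [hq₂d]; simp) hs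
    · have hs : s₁ = s₂ := by
        have e1 : c₁.p.head? = some s₁ := by rw [hp₁d]; simp
        have e2 : c₂.p.head? = some s₂ := by rw [hp₂d]; simp
        rw [hpp, e2] at e1
        exact (Option.some_inj.1 e1).symm
      have hint : s₂ ∈ interm c₁.q := by
        rw [hsuf, hq₂d]
        exact split_interm hd (by simp)
      exact interm_ne_head? c₁.chain_q hint (by rw [hq₁d]; simp) hs.symm
  · rcases disagree c₁.chain_p c₂.chain_p hp1 hp2 hpp with
      ⟨v, u₁, u₂, hv1, hv2, hu, ha1, ha2⟩ | ⟨d, hd, hsuf⟩ | ⟨d, hd, hsuf⟩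
    · exact no_hybrid_interm hb h1n c₁ (Set.mem_union_left _ hv1) ⟨u₁, u₂, hu, ha1, ha2⟩
    · -- c₂.p = d ++ c₁.p : s₁ is intermediate in c₂.p
      have hs₁int : s₁ ∈ interm c₂.p := by
        rw [hsuf, hp₁d]
        exact split_interm hd (by simp)
      have hq1h : c₁.q.head? = some s₁ := by rw [← c₁.same_origin, hp₁d]; simp
      have hq2h : c₂.q.head? = some s₂ := by rw [← c₂.same_origin, hp₂d]; simp
      have hss : s₁ ≠ s₂ := interm_ne_head? c₂.chain_p hs₁int (by rw [hp₂d]; simp)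
      have hqq : c₁.q ≠ c₂.q := by
        intro h
        rw [h, hq2h] at hq1h
        exact hss (Option.some_inj.1 hq1h).symm
      rcases disagree c₁.chain_q c₂.chain_q hq1 hq2 hqq with
        ⟨v, u₁, u₂, hv1, hv2, hu, ha1, ha2⟩ | ⟨d', hd', hsuf'⟩ | ⟨d', hd', hsuf'⟩
      · exact no_hybrid_interm hb h1n c₁ (Set.mem_union_right _ hv1) ⟨u₁, u₂, hu, ha1, ha2⟩
      · have hint : s₁ ∈ interm c₂.q := by
          rw [hsuf', hq₁d]
          exact split_interm hd' (by simp)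
        exact c₂.intDisjoint s₁ hs₁int hint
      · have hint : s₂ ∈ interm c₁.q := by
          rw [hsuf', hq₂d]
          exact split_interm hd' (by simp)
        have tg1 : Relation.TransGen N.arc s₂ s₁ :=
          head_transGen_of_interm c₂.chain_p hs₁int hp₂d
        have tg2 : Relation.TransGen N.arc s₁ s₂ :=
          head_transGen_of_interm c₁.chain_q hint hq₁d
        exact N.acyclic s₁ (tg2.trans tg1)
    · -- c₁.p = d ++ c₂.p : s₂ is intermediate in c₁.p
      have hs₂int : s₂ ∈ interm c₁.p := by
        rw [hsuf, hp₂d]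
        exact split_interm hd (by simp)
      have hq1h : c₁.q.head? = some s₁ := by rw [← c₁.same_origin, hp₁d]; simp
      have hq2h : c₂.q.head? = some s₂ := by rw [← c₂.same_origin, hp₂d]; simp
      have hss : s₂ ≠ s₁ := interm_ne_head? c₁.chain_p hs₂int (by rw [hp₁d]; simp)
      have hqq : c₁.q ≠ c₂.q := by
        intro h
        rw [h, hq2h] at hq1h
        exact hss (Option.some_inj.1 hq1h)
      rcases disagree c₁.chain_q c₂.chain_q hq1 hq2 hqq with
        ⟨v, u₁, u₂, hv1, hv2, hu, ha1, ha2⟩ | ⟨d', hd', hsuf'⟩ | ⟨d', hd', hsuf'⟩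
      · exact no_hybrid_interm hb h1n c₁ (Set.mem_union_right _ hv1) ⟨u₁, u₂, hu, ha1, ha2⟩
      · have hint : s₁ ∈ interm c₂.q := by
          rw [hsuf', hq₁d]
          exact split_interm hd' (by simp)
        have tg1 : Relation.TransGen N.arc s₁ s₂ :=
          head_transGen_of_interm c₁.chain_p hs₂int hp₁d
        have tg2 : Relation.TransGen N.arc s₂ s₁ :=
          head_transGen_of_interm c₂.chain_q hint hq₂d
        exact N.acyclic s₁ (tg1.trans tg2)
      · have hint : s₂ ∈ interm c₁.q := by
          rw [hsuf', hq₂d]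
          exact split_interm hd' (by simp)
        exact c₁.intDisjoint s₂ hs₂int hint

lemma same_hend (hb : N.Binary) (h1n : N.OneNested) (c₁ c₂ : RetCycle N)
    (hh : c₁.hend = c₂.hend) (hnE : ¬ c₁.Equiv c₂) : False := by
  obtain ⟨r₁, a₁, r₂, b₁, hp1, hq1⟩ := c₁.destruct_last
  obtain ⟨r₃, a₂, r₄, b₂, hp2, hq2⟩ := c₂.destruct_last
  rw [← hh] at hp2 hq2
  have hab2 : a₂ ≠ b₂ := c₂.penult_ne hp2 hq2
  have harcA : N.arc a₂ c₁.hend := by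
    have := penult_arc c₂.chain_p hp2; exact this
  have harcB : N.arc b₂ c₁.hend := penult_arc c₂.chain_q hq2
  rcases c₁.arc_to_hend hb hp1 hq1 harcA with rfl | rfl <;>
    rcases c₁.arc_to_hend hb hp1 hq1 harcB with rfl | rfl
  · exact hab2 rfl
  · exact same_hend_matched hb h1n c₁ c₂ hh hp1 hq1 hp2 hq2
      (fun hEq => hnE (Or.inl hEq))
  · -- a₂ = b₁ and b₂ = a₁ : compare with the swap of c₂
    exact same_hend_matched hb h1n c₁ c₂.swap hh hp1 hq1 hq2 hp2
      (fun hEq => hnE (Or.inr hEq))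
  · exact hab2 rfl

end EvoNet

theorem binary_oneNested_galled {V : Type*} (N : EvoNet V)
    (hb : N.Binary) (h1n : N.OneNested) : N.Galled := by
  intro c₁ c₂ hne
  rw [Set.disjoint_left]
  intro x hx1 hx2
  by_cases hh : c₁.hend = c₂.hend
  · exact EvoNet.same_hend hb h1n c₁ c₂ hh hne
  · exact EvoNet.diff_hend hb h1n c₁ c₂ hh hx1 hx2
end

section
/- In a level-1 network, the split node of every reticulation cycle is a tree node (has in-degree at most 1). -/
section Aux

open List Relation EvoNet

variable {V : Type*}

lemma aux_nodup {r : V → V → Prop} (hacyc : ∀ v, ¬ Relation.TransGen r v v)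
    {l : List V} (hl : l.Chain' r) : l.Nodup := by
  have h1 : l.Chain' (Relation.TransGen r) := hl.imp fun _ _ hab => .single hab
  haveI : IsTrans V (Relation.TransGen r) := ⟨fun _ _ _ => Relation.TransGen.trans⟩
  have hp : l.Pairwise (Relation.TransGen r) := List.isChain_iff_pairwise.mp h1
  exact hp.imp fun {a b} hab => fun (e : a = b) => by subst e; exact hacyc a hab

lemma aux_zip_chain : ∀ l : List V, l.Chain' (fun a b => (a, b) ∈ l.zip l.tail)
  | [] => List.isChain_nil
  | [_] => List.isChain_singleton _
  | a :: b :: t => by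
    unfold List.Chain'
    rw [List.isChain_cons_cons]
    refine ⟨by simp, ?_⟩
    exact (aux_zip_chain (b :: t)).imp fun _ _ hab => List.mem_cons_of_mem _ hab

lemma aux_zip_arc {r : V → V → Prop} :
    ∀ {l : List V}, l.Chain' r → ∀ {a b : V}, (a, b) ∈ l.zip l.tail → r a b
  | [], _, _, _, h => by simp at h
  | [_], _, _, _, h => by simp at h
  | x :: y :: t, hl, a, b, h => by
    unfold List.Chain' at hl
    rw [List.isChain_cons_cons] at hl
    rcases List.mem_cons.mp h with h1 | h1
    · simp only [Prod.mk.injEq] at h1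
      obtain ⟨rfl, rfl⟩ := h1
      exact hl.1
    · exact aux_zip_arc hl.2 h1

lemma aux_zip_append : ∀ (l r : List V), l.zip l.tail ⊆ (l ++ r).zip (l ++ r).tail
  | [], _ => by simp
  | [_], _ => by simp
  | a :: b :: t, r => by
    intro e he
    rcases List.mem_cons.mp he with rfl | h1
    · simp
    · exact List.mem_cons_of_mem _ (aux_zip_append (b :: t) r h1)

lemma aux_zip_cons (a : V) (l : List V) :
    l.zip l.tail ⊆ (a :: l).zip ((a :: l).tail) := by
  cases l with
  | nil => simp
  | cons b t => exact fun e he => List.mem_cons_of_mem _ he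

lemma aux_zip_suffix : ∀ (r l : List V), l.zip l.tail ⊆ (r ++ l).zip (r ++ l).tail
  | [], _ => by simp
  | a :: r', l => fun e he => aux_zip_cons a (r' ++ l) (aux_zip_suffix r' l he)

lemma aux_reach_last {u : V → V → Prop} :
    ∀ (l : List V), l.Chain' u → ∀ (hne : l ≠ []) (x : V), x ∈ l →
      Relation.ReflTransGen u x (l.getLast hne)
  | [], _, hne, _, _ => absurd rfl hne
  | [a], _, _, x, hx => by
      simp only [List.mem_singleton] at hx; subst hx; exact .refl
  | a :: b :: t, hl, _, x, hx => by
    unfold List.Chain' at hl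
    rw [List.isChain_cons_cons] at hl
    rw [List.getLast_cons (by simp : (b :: t) ≠ [])]
    rcases List.mem_cons.mp hx with rfl | hx'
    · exact .head hl.1 (aux_reach_last (b :: t) hl.2 (by simp) b (by simp))
    · exact aux_reach_last (b :: t) hl.2 (by simp) x hx'

lemma aux_reach_head {u : V → V → Prop} (hu : Symmetric u) :
    ∀ (l : List V), l.Chain' u → ∀ (hne : l ≠ []) (x : V), x ∈ l →
      Relation.ReflTransGen u x (l.head hne)
  | [], _, hne, _, _ => absurd rfl hne
  | [a], _, _, x, hx => by
      simp only [List.mem_singleton] at hx; subst hx; exact .refl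
  | a :: b :: t, hl, _, x, hx => by
    unfold List.Chain' at hl
    rw [List.isChain_cons_cons] at hl
    rcases List.mem_cons.mp hx with rfl | hx'
    · exact .refl
    · have h1 := aux_reach_head hu (b :: t) hl.2 (by simp) x hx'
      have h2 : (b :: t).head (by simp) = b := rfl
      rw [h2] at h1
      exact h1.tail (hu hl.1)

lemma aux_rtg_symm {u : V → V → Prop} (hu : Symmetric u) {x y : V}
    (h : Relation.ReflTransGen u x y) : Relation.ReflTransGen u y x := by
  induction h with
  | refl => exact .refl
  | tail _ hstep ih => exact .head (hu hstep) ih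

lemma aux_uadj_symm (B : Set (V × V)) : Symmetric (uadj B) := fun _ _ h =>
  h.elim Or.inr Or.inl

lemma aux_avoid_ne {A : Set (V × V)} {v x y : V} (hx : x ≠ v)
    (h : Relation.ReflTransGen (uadj (avoid A v)) x y) : y ≠ v := by
  induction h with
  | refl => exact hx
  | tail _ hstep _ =>
    rcases hstep with h1 | h1
    · exact h1.2.2
    · exact h1.2.1

lemma aux_last_mem_zip :
    ∀ (l : List V), 2 ≤ l.length → ∀ (hne : l ≠ []),
      ∃ y, (y, l.getLast hne) ∈ l.zip l.tail
  | [], h, _ => by simp at h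
  | [a], h, _ => by simp at h
  | [a, b], _, _ => ⟨a, by simp⟩
  | a :: b :: c :: t, _, _ => by
    obtain ⟨y, hy⟩ := aux_last_mem_zip (b :: c :: t) (by simp) (by simp)
    rw [List.getLast_cons (by simp : (b :: c :: t) ≠ [])]
    exact ⟨y, List.mem_cons_of_mem _ hy⟩

lemma aux_mem_interm {l : List V} (hne : l ≠ []) {x : V} (hx : x ∈ l)
    (hh : x ≠ l.head hne) (hl2 : x ≠ l.getLast hne) : x ∈ EvoNet.interm l := by
  cases l with
  | nil => exact absurd rfl hne
  | cons a t =>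
    have hxt : x ∈ t := by
      rcases List.mem_cons.mp hx with rfl | h1
      · exact absurd rfl hh
      · exact h1
    have htne : t ≠ [] := List.ne_nil_of_mem hxt
    have hlast : (a :: t).getLast hne = t.getLast htne := List.getLast_cons htne
    rw [hlast] at hl2
    have : x ∈ t.dropLast := by
      have := List.dropLast_append_getLast htne
      rw [← this] at hxt
      rcases List.mem_append.mp hxt with h1 | h1
      · exact h1
      · simp only [List.mem_singleton] at h1; exact absurd h1 hl2
    simpa [EvoNet.interm] using this

lemma aux_mem_cases {l : List V} (hne : l ≠ []) {x : V} (hx : x ∈ l) :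
    x = l.head hne ∨ x = l.getLast hne ∨ x ∈ EvoNet.interm l := by
  by_cases h1 : x = l.head hne
  · exact Or.inl h1
  by_cases h2 : x = l.getLast hne
  · exact Or.inr (Or.inl h2)
  exact Or.inr (Or.inr (aux_mem_interm hne hx h1 h2))

lemma aux_head_transGen {r : V → V → Prop} {l : List V} (hl : l.Chain' r)
    (h2 : 2 ≤ l.length) (hne : l ≠ []) :
    Relation.TransGen r (l.head hne) (l.getLast hne) := by
  cases l with
  | nil => simp at h2
  | cons a t =>
    cases t with
    | nil => simp at h2
    | cons b t' =>
      unfold List.Chain' at hl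
      rw [List.isChain_cons_cons] at hl
      rw [List.getLast_cons (by simp : (b :: t') ≠ [])]
      exact Relation.TransGen.head' hl.1
        (aux_reach_last (b :: t') hl.2 (by simp) b (by simp))

end Aux

theorem levelOne_split_is_tree_node {V : Type*} (N : EvoNet V)
    (hL : N.LevelOne) :
    ∀ c : EvoNet.RetCycle N, ∀ s : V, c.SplitIs s → N.IsTreeNode s := by
  intro c s hs hyb
  classical
  obtain ⟨hpne, hpch⟩ := c.isPath_p
  obtain ⟨hqne, hqch⟩ := c.isPath_q
  have hsP : c.p.head hpne = s := by
    have h1 := List.head?_eq_head hpne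
    exact Option.some.inj (h1.symm.trans hs)
  have hsQ : c.q.head hqne = s := by
    have h1 := List.head?_eq_head hqne
    exact Option.some.inj (h1.symm.trans (c.same_origin ▸ hs))
  have hhP : c.p.getLast hpne = c.hend := by
    have h1 := List.getLast?_eq_getLast hpne
    exact Option.some.inj (h1.symm.trans c.last_p)
  have hhQ : c.q.getLast hqne = c.hend := by
    have h1 := List.getLast?_eq_getLast hqne
    exact Option.some.inj (h1.symm.trans c.last_q)
  have nodP : c.p.Nodup := aux_nodup N.acyclic hpch
  have nodQ : c.q.Nodup := aux_nodup N.acyclic hqch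
  have hsh : s ≠ c.hend := by
    intro he
    have h1 := aux_head_transGen hpch c.len_p hpne
    rw [hsP, hhP, ← he] at h1
    exact N.acyclic _ h1
  have hPA : ∀ e ∈ c.p.zip c.p.tail, e ∈ c.arcs := fun e he => Or.inl he
  have hQA : ∀ e ∈ c.q.zip c.q.tail, e ∈ c.arcs := fun e he => Or.inr he
  -- C1 : segment connectivity after removing a vertex
  have C1 : ∀ (l : List V) (hlne : l ≠ []), l.Nodup →
      (∀ e ∈ l.zip l.tail, e ∈ c.arcs) → ∀ (v x : V), x ∈ l → x ≠ v →
      Relation.ReflTransGen (EvoNet.uadj (EvoNet.avoid c.arcs v)) x (l.head hlne) ∨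
      Relation.ReflTransGen (EvoNet.uadj (EvoNet.avoid c.arcs v)) x (l.getLast hlne) := by
    intro l hlne hnod hzA v x hx hxv
    by_cases hvl : v ∈ l
    · obtain ⟨l1, l2, rfl⟩ := List.append_of_mem hvl
      obtain ⟨nod1, nod2, hdisj⟩ := List.nodup_append'.mp hnod
      have hv1 : v ∉ l1 := fun h => hdisj h (List.mem_cons_self)
      have hv2 : v ∉ l2 := (List.nodup_cons.mp nod2).1
      rcases List.mem_append.mp hx with hx1 | hx2
      · left
        have h1ne : l1 ≠ [] := List.ne_nil_of_mem hx1
        have hch : l1.Chain' (EvoNet.uadj (EvoNet.avoid c.arcs v)) := by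
          refine (aux_zip_chain l1).imp fun a b hab => ?_
          have hmem : (a, b) ∈ (l1 ++ v :: l2).zip (l1 ++ v :: l2).tail :=
            aux_zip_append l1 (v :: l2) hab
          obtain ⟨ha, hb⟩ := List.of_mem_zip hab
          exact Or.inl ⟨hzA _ hmem, fun h => hv1 (h ▸ ha),
            fun h => hv1 (h ▸ List.mem_of_mem_tail hb)⟩
        have hres := aux_reach_head (aux_uadj_symm _) l1 hch h1ne x hx1
        have hhead : (l1 ++ v :: l2).head hlne = l1.head h1ne := by
          rw [List.head_append]
          simp [h1ne]
        rwa [hhead]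
      · right
        have hx2' : x ∈ l2 := by
          rcases List.mem_cons.mp hx2 with rfl | h
          · exact absurd rfl hxv
          · exact h
        have h2ne : l2 ≠ [] := List.ne_nil_of_mem hx2'
        have hzsub : l2.zip l2.tail ⊆ (l1 ++ v :: l2).zip (l1 ++ v :: l2).tail := by
          have := aux_zip_suffix (l1 ++ [v]) l2
          rwa [List.append_assoc, List.singleton_append] at this
        have hch : l2.Chain' (EvoNet.uadj (EvoNet.avoid c.arcs v)) := by
          refine (aux_zip_chain l2).imp fun a b hab => ?_
          obtain ⟨ha, hb⟩ := List.of_mem_zip hab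
          exact Or.inl ⟨hzA _ (hzsub hab), fun h => hv2 (h ▸ ha),
            fun h => hv2 (h ▸ List.mem_of_mem_tail hb)⟩
        have hres := aux_reach_last l2 hch h2ne x hx2'
        have hlast : (l1 ++ v :: l2).getLast hlne = l2.getLast h2ne := by
          rw [List.getLast_append]
          have : (v :: l2).isEmpty = false := rfl
          simp only [this]
          exact List.getLast_cons h2ne
        rwa [hlast]
    · left
      have hch : l.Chain' (EvoNet.uadj (EvoNet.avoid c.arcs v)) := by
        refine (aux_zip_chain l).imp fun a b hab => ?_
        obtain ⟨ha, hb⟩ := List.of_mem_zip hab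
        exact Or.inl ⟨hzA _ hab, fun h => hvl (h ▸ ha),
          fun h => hvl (h ▸ List.mem_of_mem_tail hb)⟩
      exact aux_reach_head (aux_uadj_symm _) l hch hlne x hx
  -- C2 : split and hybrid end stay connected after removing any other vertex
  have C2 : ∀ v : V, v ≠ s → v ≠ c.hend →
      Relation.ReflTransGen (EvoNet.uadj (EvoNet.avoid c.arcs v)) s c.hend := by
    intro v hvs hvh
    have key : ∀ (l : List V) (hlne : l ≠ []), l.Chain' N.arc →
        (∀ e ∈ l.zip l.tail, e ∈ c.arcs) → v ∉ l → l.head hlne = s → l.getLast hlne = c.hend →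
        Relation.ReflTransGen (EvoNet.uadj (EvoNet.avoid c.arcs v)) s c.hend := by
      intro l hlne hch hzA hvl hh hl
      have hch' : l.Chain' (EvoNet.uadj (EvoNet.avoid c.arcs v)) := by
        refine (aux_zip_chain l).imp fun a b hab => ?_
        obtain ⟨ha, hb⟩ := List.of_mem_zip hab
        exact Or.inl ⟨hzA _ hab, fun h => hvl (h ▸ ha),
          fun h => hvl (h ▸ List.mem_of_mem_tail hb)⟩
      have hres := aux_reach_last l hch' hlne (l.head hlne) (List.head_mem hlne)
      rwa [hh, hl] at hres
    by_cases hvP : v ∈ c.p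
    · have hvip : v ∈ EvoNet.interm c.p :=
        aux_mem_interm hpne hvP (fun h => hvs (h.trans hsP)) (fun h => hvh (h.trans hhP))
      have hviq := c.intDisjoint v hvip
      have hvQ : v ∉ c.q := by
        intro hvq
        rcases aux_mem_cases hqne hvq with h1 | h1 | h1
        · exact hvs (h1.trans hsQ)
        · exact hvh (h1.trans hhQ)
        · exact hviq h1
      exact key c.q hqne hqch hQA hvQ hsQ hhQ
    · exact key c.p hpne hpch hPA hvP hsP hhP
  -- the cycle is biconnected
  have hbc : N.Biconnected c.arcs := by
    refine ⟨?_, ?_, ?_⟩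
    · rintro ⟨a, b⟩ he
      rcases he with h1 | h1
      · exact aux_zip_arc hpch h1
      · exact aux_zip_arc hqch h1
    · intro x y hx hy
      have hreach : ∀ z : V, z ∈ EvoNet.everts c.arcs →
          Relation.ReflTransGen (EvoNet.uadj c.arcs) z c.hend := by
        intro z hz
        have hzmem : z ∈ c.p ∨ z ∈ c.q := by
          obtain ⟨w, hw | hw⟩ := hz
          · rcases hw with h1 | h1
            · exact Or.inl (List.of_mem_zip h1).1
            · exact Or.inr (List.of_mem_zip h1).1
          · rcases hw with h1 | h1
            · exact Or.inl (List.mem_of_mem_tail (List.of_mem_zip h1).2)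
            · exact Or.inr (List.mem_of_mem_tail (List.of_mem_zip h1).2)
        have hchp : c.p.Chain' (EvoNet.uadj c.arcs) :=
          (aux_zip_chain c.p).imp fun a b hab => Or.inl (hPA _ hab)
        have hchq : c.q.Chain' (EvoNet.uadj c.arcs) :=
          (aux_zip_chain c.q).imp fun a b hab => Or.inl (hQA _ hab)
        rcases hzmem with h1 | h1
        · have hres := aux_reach_last c.p hchp hpne z h1
          rwa [hhP] at hres
        · have hres := aux_reach_last c.q hchq hqne z h1
          rwa [hhQ] at hres
      exact (hreach x hx).trans (aux_rtg_symm (aux_uadj_symm _) (hreach y hy))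
    · intro v x y hx hy
      have hget : ∀ z : V, z ∈ EvoNet.everts (EvoNet.avoid c.arcs v) →
          z ≠ v ∧
          (Relation.ReflTransGen (EvoNet.uadj (EvoNet.avoid c.arcs v)) z s ∨
           Relation.ReflTransGen (EvoNet.uadj (EvoNet.avoid c.arcs v)) z c.hend) := by
        intro z hz
        obtain ⟨w, hw⟩ := hz
        have hz2 : z ≠ v ∧ ((z, w) ∈ c.arcs ∨ (w, z) ∈ c.arcs) := by
          rcases hw with h1 | h1
          · exact ⟨h1.2.1, Or.inl h1.1⟩
          · exact ⟨h1.2.2, Or.inr h1.1⟩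
        obtain ⟨hzv, hmem⟩ := hz2
        refine ⟨hzv, ?_⟩
        have hzpq : z ∈ c.p ∨ z ∈ c.q := by
          rcases hmem with h1 | h1 <;> rcases h1 with h2 | h2
          · exact Or.inl (List.of_mem_zip h2).1
          · exact Or.inr (List.of_mem_zip h2).1
          · exact Or.inl (List.mem_of_mem_tail (List.of_mem_zip h2).2)
          · exact Or.inr (List.mem_of_mem_tail (List.of_mem_zip h2).2)
        rcases hzpq with h1 | h1
        · have hres := C1 c.p hpne nodP hPA v z h1 hzv
          rwa [hsP, hhP] at hres
        · have hres := C1 c.q hqne nodQ hQA v z h1 hzv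
          rwa [hsQ, hhQ] at hres
      obtain ⟨hxv, Dx⟩ := hget x hx
      obtain ⟨hyv, Dy⟩ := hget y hy
      have symmR : ∀ {a b : V},
          Relation.ReflTransGen (EvoNet.uadj (EvoNet.avoid c.arcs v)) a b →
          Relation.ReflTransGen (EvoNet.uadj (EvoNet.avoid c.arcs v)) b a :=
        fun h => aux_rtg_symm (aux_uadj_symm _) h
      by_cases hvs : v = s
      · have Dx' := Dx.resolve_left fun h1 => (aux_avoid_ne hxv h1) hvs.symm
        have Dy' := Dy.resolve_left fun h1 => (aux_avoid_ne hyv h1) hvs.symm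
        exact Dx'.trans (symmR Dy')
      · by_cases hvh : v = c.hend
        · have Dx' := Dx.resolve_right fun h1 => (aux_avoid_ne hxv h1) hvh.symm
          have Dy' := Dy.resolve_right fun h1 => (aux_avoid_ne hyv h1) hvh.symm
          exact Dx'.trans (symmR Dy')
        · have hsh' := C2 v hvs hvh
          have Dx' : Relation.ReflTransGen (EvoNet.uadj (EvoNet.avoid c.arcs v)) x s := by
            rcases Dx with h1 | h1
            · exact h1
            · exact h1.trans (symmR hsh')
          have Dy' : Relation.ReflTransGen (EvoNet.uadj (EvoNet.avoid c.arcs v)) y s := by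
            rcases Dy with h1 | h1
            · exact h1
            · exact h1.trans (symmR hsh')
          exact Dx'.trans (symmR Dy')
  -- memberships of s and hend in the cycle's vertex set
  have hex : ∃ a b t, c.p = a :: b :: t := by
    have h2 := c.len_p
    cases hp : c.p with
    | nil => rw [hp] at h2; simp at h2
    | cons a t =>
      cases t with
      | nil => rw [hp] at h2; simp at h2
      | cons b t' => exact ⟨a, b, t', rfl⟩
  obtain ⟨a, b, t, hpeq⟩ := hex
  have ha : a = s := by
    have h1 : c.p.head? = some s := hs
    rw [hpeq] at h1
    simpa using h1
  have hsA : s ∈ EvoNet.everts c.arcs := by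
    refine ⟨b, Or.inl (hPA _ ?_)⟩
    rw [hpeq, ← ha]
    simp
  have hhA : c.hend ∈ EvoNet.everts c.arcs := by
    obtain ⟨y, hy⟩ := aux_last_mem_zip c.p c.len_p hpne
    rw [hhP] at hy
    exact ⟨y, Or.inr (hPA _ hy)⟩
  exact hsh (hL c.arcs hbc s c.hend hyb c.hybrid hsA hhA)
end

section
/- If an evolutionary network contains a hybrid node with three pairwise distinct parents, then it contains two reticulation cycles sharing an arc, and hence it is not a weakly galled tree. -/
section Aux

variable {V : Type*}

open List

/-- A path realizing a `ReflTransGen`. -/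
lemma EvoNet.exists_path (N : EvoNet V) {x y : V}
    (hxy : Relation.ReflTransGen N.arc x y) :
    ∃ p : List V, p.Chain' N.arc ∧ p.head? = some x ∧ p.getLast? = some y := by
  induction hxy with
  | refl => exact ⟨[x], List.isChain_singleton _, rfl, rfl⟩
  | @tail b c _ harc ih =>
    obtain ⟨p, hc, hh, hl⟩ := ih
    refine ⟨p ++ [c], ?_, ?_, by simp⟩
    · rw [List.Chain', List.isChain_append]
      refine ⟨hc, by simp, ?_⟩
      intro u hu v hv
      simp only [List.head?_cons, Option.mem_def, Option.some.injEq] at hv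
      rw [hl] at hu
      simp only [Option.mem_def, Option.some.injEq] at hu
      subst hu; subst hv; exact harc
    · rcases p with _ | ⟨z, p⟩
      · simp at hh
      · simpa using hh

/-- A long-enough suffix of a list ending in `[a, h]` also ends in `[a, h]`. -/
lemma suffix_ends {p s : List V} {a h : V} (hr : ∃ r, p = r ++ [a, h])
    (hs : s <:+ p) (hlen : 2 ≤ s.length) : ∃ r, s = r ++ [a, h] := by
  obtain ⟨r, rfl⟩ := hr
  have hslen : s.length ≤ r.length + 2 := by simpa using hs.length_le
  set k := (r ++ [a, h]).length - s.length with hkdef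
  have hk : k ≤ r.length := by
    rw [hkdef]
    simp only [List.length_append, List.length_cons, List.length_nil]
    omega
  rw [List.suffix_iff_eq_drop] at hs
  refine ⟨r.drop k, ?_⟩
  rw [hs, List.drop_append_of_le_length hk]

/-- Cut a path at an intermediate node `x`, keeping the suffix. -/
lemma cut_suffix {p : List V} {x : V} (hp : 2 ≤ p.length)
    (hx : x ∈ EvoNet.interm p) :
    ∃ p', p' <:+ p ∧ p'.head? = some x ∧ 2 ≤ p'.length ∧ p'.length < p.length := by
  have hx' : x ∈ (p.drop 1).dropLast := hx
  set t := p.drop 1 with ht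
  have htlen : t.length = p.length - 1 := by rw [ht]; simp
  have htne : t ≠ [] := List.ne_nil_of_length_pos (by omega)
  obtain ⟨u, v, huv⟩ := List.append_of_mem hx'
  have htt : t = u ++ x :: (v ++ [t.getLast htne]) := by
    conv_lhs => rw [← List.dropLast_append_getLast htne, huv]
    simp
  refine ⟨x :: (v ++ [t.getLast htne]), ?_, rfl,
    by simp only [List.length_cons, List.length_append, List.length_nil]; omega, ?_⟩
  · exact List.IsSuffix.trans ⟨u, htt.symm⟩ (ht ▸ List.drop_suffix 1 p)
  · have h2 : t.length = u.length + (v.length + 2) := by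
      rw [htt]
      simp only [List.length_cons, List.length_append, List.length_nil]
      try omega
    simp only [List.length_cons, List.length_append, List.length_nil]
    omega

/-- The arc `(a, h)` at the end of a path is among its consecutive pairs. -/
lemma mem_zip_end (a h : V) : ∀ (r : List V),
    (a, h) ∈ (r ++ [a, h]).zip (r ++ [a, h]).tail := by
  have step : ∀ (c : V) (M : List V) (e : V × V),
      e ∈ M.zip M.tail → e ∈ (c :: M).zip M := by
    intro c M e he
    rcases M with _ | ⟨d, M'⟩
    · simp at he
    · simpa using Or.inr (by simpa using he)
  intro r
  induction r with
  | nil => simp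
  | cons c r ih => exact step c _ _ ih

/-- Ending in `[a,h]` vs `[b,h]` with `a ≠ b` forces the lists to differ. -/
lemma ends_ne {p q : List V} {a b h : V} (hab : a ≠ b)
    (hp : ∃ r, p = r ++ [a, h]) (hq : ∃ s, q = s ++ [b, h]) : p ≠ q := by
  obtain ⟨r, rfl⟩ := hp
  obtain ⟨s, rfl⟩ := hq
  intro heq
  have hlen : r.length = s.length := by
    have := congrArg List.length heq
    simpa using this
  have h2 := (List.append_inj heq hlen).2
  simp only [List.cons.injEq] at h2
  exact hab h2.1

/-- Key combinatorial lemma: from any two merge paths one can extract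
internally disjoint ones with the same tails. -/
lemma exists_disjoint_pair (N : EvoNet V) (h a b : V) :
    ∀ (n : ℕ) (p q : List V), p.Chain' N.arc → q.Chain' N.arc →
    (∃ r, p = r ++ [a, h]) → (∃ s, q = s ++ [b, h]) → p.head? = q.head? →
    p.length + q.length ≤ n →
    ∃ p' q' : List V, p'.Chain' N.arc ∧ q'.Chain' N.arc ∧
      (∃ r, p' = r ++ [a, h]) ∧ (∃ s, q' = s ++ [b, h]) ∧
      p'.head? = q'.head? ∧ ∀ x, x ∈ EvoNet.interm p' → x ∉ EvoNet.interm q' := by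
  intro n
  induction n with
  | zero =>
    rintro p q _ _ ⟨r, rfl⟩ _ _ hlen
    simp at hlen
  | succ n ih =>
    intro p q hcp hcq hpr hqs hhead hlen
    by_cases hdisj : ∀ x, x ∈ EvoNet.interm p → x ∉ EvoNet.interm q
    · exact ⟨p, q, hcp, hcq, hpr, hqs, hhead, hdisj⟩
    · push_neg at hdisj
      obtain ⟨x, hxp, hxq⟩ := hdisj
      have hplen : 2 ≤ p.length := by obtain ⟨r, rfl⟩ := hpr; simp; try omega
      have hqlen : 2 ≤ q.length := by obtain ⟨s, rfl⟩ := hqs; simp; try omega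
      obtain ⟨p', hp's, hp'h, hp'2, hp'lt⟩ := cut_suffix hplen hxp
      obtain ⟨q', hq's, hq'h, hq'2, hq'lt⟩ := cut_suffix hqlen hxq
      refine ih p' q' (hcp.suffix hp's) (hcq.suffix hq's)
        (suffix_ends hpr hp's hp'2) (suffix_ends hqs hq's hq'2)
        (by rw [hp'h, hq'h]) (by omega)

/-- Assemble a reticulation cycle from two internally disjoint merge paths. -/
lemma build_cycle (N : EvoNet V) (h a b : V) (hab : a ≠ b)
    (ha : N.arc a h) (hb : N.arc b h)
    {p q : List V} (hcp : p.Chain' N.arc) (hcq : q.Chain' N.arc)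
    (hpr : ∃ r, p = r ++ [a, h]) (hqs : ∃ s, q = s ++ [b, h])
    (hhead : p.head? = q.head?)
    (hdisj : ∀ x, x ∈ EvoNet.interm p → x ∉ EvoNet.interm q) :
    ∃ C : EvoNet.RetCycle N, C.p = p ∧ C.q = q ∧
      (a, h) ∈ C.arcs ∧ (b, h) ∈ C.arcs := by
  obtain ⟨r, hr⟩ := hpr
  obtain ⟨s, hs⟩ := hqs
  have lastp : p.getLast? = some h := by
    rw [hr, show r ++ [a, h] = (r ++ [a]) ++ [h] by simp, List.getLast?_concat]
  have lastq : q.getLast? = some h := by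
    rw [hs, show s ++ [b, h] = (s ++ [b]) ++ [h] by simp, List.getLast?_concat]
  refine ⟨⟨h, p, q, ⟨by simp [hr], hcp⟩, ⟨by simp [hs], hcq⟩,
    by rw [hr]; simp only [List.length_append, List.length_cons, List.length_nil]; omega,
    by rw [hs]; simp only [List.length_append, List.length_cons, List.length_nil]; omega,
    hhead, lastp, lastq, ⟨a, b, hab, ha, hb⟩, hdisj,
    ends_ne hab ⟨r, hr⟩ ⟨s, hs⟩⟩, rfl, rfl, ?_, ?_⟩
  · exact Or.inl (hr ▸ mem_zip_end a h r)
  · exact Or.inr (hs ▸ mem_zip_end b h s)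

end Aux

theorem three_parents_not_weaklyGalled {V : Type*} (N : EvoNet V)
    (h a b c : V) (hab : a ≠ b) (hac : a ≠ c) (hbc : b ≠ c)
    (ha : N.arc a h) (hb : N.arc b h) (hc : N.arc c h) :
    (∃ c₁ c₂ : EvoNet.RetCycle N, ¬ c₁.Equiv c₂ ∧
      ∃ e : V × V, e ∈ c₁.arcs ∧ e ∈ c₂.arcs) ∧
    ¬ N.WeaklyGalled := by
  classical
  -- paths from the root to each parent, extended by the arc into `h`
  have mkpath : ∀ v : V, N.arc v h → ∃ p : List V,
      p.Chain' N.arc ∧ (∃ r, p = r ++ [v, h]) ∧ p.head? = some N.root := by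
    intro v hv
    obtain ⟨p0, hc0, hh0, hl0⟩ := N.exists_path (N.rooted v)
    have hp0ne : p0 ≠ [] := by rintro rfl; simp at hh0
    refine ⟨p0 ++ [h], ?_, ⟨p0.dropLast, ?_⟩, ?_⟩
    · rw [List.Chain', List.isChain_append]
      refine ⟨hc0, by simp, ?_⟩
      intro u hu w hw
      rw [hl0] at hu
      simp only [Option.mem_def, Option.some.injEq, List.head?_cons] at hu hw
      subst hu; subst hw; exact hv
    · conv_lhs => rw [← List.dropLast_append_getLast? v hl0]
      simp
    · rw [List.head?_append_of_ne_nil _ hp0ne, hh0]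
  obtain ⟨pa, hca, hra, hha⟩ := mkpath a ha
  obtain ⟨pb, hcb, hrb, hhb⟩ := mkpath b hb
  obtain ⟨pc, hcc, hrc, hhc⟩ := mkpath c hc
  -- cycle through parents a and b
  obtain ⟨p₁, q₁, hc1p, hc1q, he1p, he1q, hh1, hd1⟩ :=
    exists_disjoint_pair N h a b (pa.length + pb.length) pa pb hca hcb hra hrb
      (by rw [hha, hhb]) le_rfl
  obtain ⟨C₁, hC1p, hC1q, haC₁, _⟩ := build_cycle N h a b hab ha hb hc1p hc1q he1p he1q hh1 hd1
  -- cycle through parents a and c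
  obtain ⟨p₂, q₂, hc2p, hc2q, he2p, he2q, hh2, hd2⟩ :=
    exists_disjoint_pair N h a c (pa.length + pc.length) pa pc hca hcc hra hrc
      (by rw [hha, hhc]) le_rfl
  obtain ⟨C₂, hC2p, hC2q, haC₂, _⟩ := build_cycle N h a c hac ha hc hc2p hc2q he2p he2q hh2 hd2
  have hne : ¬ C₁.Equiv C₂ := by
    rintro (⟨h1, h2⟩ | ⟨h1, h2⟩)
    · exact ends_ne hbc he1q he2q (hC1q.symm.trans (h2.trans hC2q))
    · exact ends_ne hac he1p he2q (hC1p.symm.trans (h1.trans hC2q))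
  refine ⟨⟨C₁, C₂, hne, (a, h), haC₁, haC₂⟩, fun W => ?_⟩
  exact Set.not_disjoint_iff.2 ⟨(a, h), haC₁, haC₂⟩ (W C₁ C₂ hne)
end

section
/- In a rooted DAG, if h is a hybrid node with two distinct proper ancestors u and v such that some paths u⇝h and v⇝h share only the node h, and there is no minimal common ancestor of u and v equal to u or v, then there exists a reticulation cycle for h containing both u and v. -/
section Aux

variable {V : Type*} {r : V → V → Prop}

lemma aux_mem_of_head? {l : List V} {a : V} (h : l.head? = some a) : a ∈ l := by
  cases l with
  | nil => simp at h
  | cons b t => simp_all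

lemma aux_mem_of_getLast? {l : List V} {b : V} (h : l.getLast? = some b) : b ∈ l := by
  obtain ⟨hne, heq⟩ := List.mem_getLast?_eq_getLast (x := b) (l := l) h
  exact heq ▸ List.getLast_mem hne

lemma aux_getLast?_cons_ne {a : V} {t : List V} (ht : t ≠ []) :
    (a :: t).getLast? = t.getLast? := by
  cases t with
  | nil => exact absurd rfl ht
  | cons c t' => simp

lemma aux_chain'_head_rtg : ∀ {l : List V}, l.Chain' r → ∀ {a x : V},
    l.head? = some a → x ∈ l → Relation.ReflTransGen r a x := by
  intro l
  induction l with
  | nil => simp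
  | cons b t ih =>
    intro hc a x ha hx
    obtain rfl : b = a := by simpa using ha
    rcases List.mem_cons.1 hx with rfl | hx
    · exact Relation.ReflTransGen.refl
    · cases t with
      | nil => simp at hx
      | cons c t' =>
        have h1 := (List.isChain_cons_cons.1 hc).1
        exact Relation.ReflTransGen.head h1 (ih (List.isChain_cons_cons.1 hc).2 rfl hx)

lemma aux_chain'_last_rtg : ∀ {l : List V}, l.Chain' r → ∀ {b x : V},
    l.getLast? = some b → x ∈ l → Relation.ReflTransGen r x b := by
  intro l
  induction l with
  | nil => simp
  | cons a t ih =>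
    intro hc b x hb hx
    rcases List.mem_cons.1 hx with rfl | hx
    · exact aux_chain'_head_rtg hc rfl (aux_mem_of_getLast? hb)
    · cases t with
      | nil => simp at hx
      | cons c t' =>
        have hb' : (c :: t').getLast? = some b := by
          rwa [aux_getLast?_cons_ne (List.cons_ne_nil c t')] at hb
        exact ih (List.isChain_cons_cons.1 hc).2 hb' hx

lemma aux_chain'_nodup (hacyc : ∀ x : V, ¬ Relation.TransGen r x x) :
    ∀ {l : List V}, l.Chain' r → l.Nodup := by
  intro l
  induction l with
  | nil => exact fun _ => List.nodup_nil
  | cons a t ih =>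
    intro hc
    cases t with
    | nil => simp
    | cons c t' =>
      obtain ⟨h1, h2⟩ := List.isChain_cons_cons.1 hc
      refine List.nodup_cons.2 ⟨?_, ih h2⟩
      intro ha
      exact hacyc a (Relation.TransGen.head' h1 (aux_chain'_head_rtg h2 rfl ha))

lemma aux_tg_path {a b : V} (h : Relation.TransGen r a b) :
    ∃ l : List V, l.Chain' r ∧ l.head? = some a ∧ l.getLast? = some b ∧ 2 ≤ l.length := by
  induction h with
  | @single c hac => exact ⟨[a, c], List.isChain_pair.2 hac, rfl, rfl, by simp⟩
  | @tail c d hac hcd ih =>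
    obtain ⟨l, hc, hh, hl, hlen⟩ := ih
    obtain ⟨a', t, rfl⟩ : ∃ a' t, l = a' :: t := by
      cases l with
      | nil => simp at hh
      | cons a' t => exact ⟨a', t, rfl⟩
    refine ⟨(a' :: t) ++ [d], ?_, by simpa using hh, List.getLast?_concat, by simp⟩
    refine List.isChain_append.2 ⟨hc, List.isChain_singleton _, ?_⟩
    intro x hx y hy
    rw [hl] at hx
    simp only [Option.mem_def, Option.some.injEq, List.head?_cons] at hx hy
    subst hx
    subst hy
    exact hcd

lemma aux_interm_mem {l : List V} {x : V} (hx : x ∈ EvoNet.interm l) : x ∈ l.tail := by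
  have h1 : x ∈ l.tail.dropLast := by
    simpa [EvoNet.interm, List.drop_one] using hx
  exact List.dropLast_subset _ h1

lemma aux_interm_ne_last {l : List V} {x b : V} (hnd : l.Nodup)
    (hl : l.getLast? = some b) (hx : x ∈ EvoNet.interm l) : x ≠ b := by
  have hxt : x ∈ l.tail.dropLast := by
    simpa [EvoNet.interm, List.drop_one] using hx
  cases l with
  | nil => simp at hl
  | cons a t =>
    simp only [List.tail_cons] at hxt
    have ht : t ≠ [] := by
      rintro rfl; simp at hxt
    have hlt : t.getLast? = some b := by
      rwa [aux_getLast?_cons_ne ht] at hl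
    obtain ⟨hne, heq⟩ := List.mem_getLast?_eq_getLast (x := b) (l := t) hlt
    have hndt : t.Nodup := (List.nodup_cons.1 hnd).2
    have hkey : t.getLast hne ∉ t.dropLast := by
      have hdec := List.dropLast_append_getLast hne
      rw [← hdec] at hndt
      intro hmem
      exact (List.nodup_append.1 hndt).2.2 _ hmem _ (List.mem_singleton_self _) rfl
    intro rfl'
    rw [heq] at rfl'
    exact hkey (rfl' ▸ hxt)

lemma aux_tail_ne_head {l : List V} {a x : V} (hnd : l.Nodup)
    (hh : l.head? = some a) (hx : x ∈ l.tail) : x ≠ a := by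
  cases l with
  | nil => simp at hh
  | cons b t =>
    simp only [List.head?_cons, Option.some.injEq] at hh
    subst hh
    simp only [List.tail_cons] at hx
    intro rfl'
    exact (List.nodup_cons.1 hnd).1 (rfl' ▸ hx)

lemma aux_head_ne_last {l : List V} {a b : V} (hnd : l.Nodup)
    (hh : l.head? = some a) (hl : l.getLast? = some b) (hlen : 2 ≤ l.length) :
    a ≠ b := by
  cases l with
  | nil => simp at hh
  | cons c t =>
    have hca : c = a := by simpa using hh
    have ht : t ≠ [] := by rintro rfl; simp at hlen
    have hlt : t.getLast? = some b := by rwa [aux_getLast?_cons_ne ht] at hl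
    have hbt : b ∈ t := aux_mem_of_getLast? hlt
    intro hab
    apply (List.nodup_cons.1 hnd).1
    rw [hca, hab]
    exact hbt

lemma aux_head?_dropLast {l : List V} (h : 2 ≤ l.length) :
    l.dropLast.head? = l.head? := by
  match l with
  | [] => simp at h
  | [a] => simp at h
  | a :: b :: t => simp

lemma aux_head?_append_of_ne_nil {l₁ l₂ : List V} (h : l₁ ≠ []) :
    (l₁ ++ l₂).head? = l₁.head? := by
  cases l₁ with
  | nil => exact absurd rfl h
  | cons a t => rfl

lemma aux_getLast?_suffix {l l' : List V} (h : l' <:+ l) (hne : l' ≠ []) :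
    l.getLast? = l'.getLast? := by
  obtain ⟨w, rfl⟩ := h
  exact List.getLast?_append_of_ne_nil _ hne

lemma aux_shrink (Q p : List V) (h : V)
    (hpQ : ∀ x ∈ p, x ∈ Q → x = h) :
    ∀ n : ℕ, ∀ T : List V, T.length ≤ n →
      (T ++ p).Chain' r → (T ++ p).Nodup → (T ++ p).getLast? = some h →
      (∃ s, (T ++ p).head? = some s ∧ s ∈ Q) →
      ∃ T' : List V, (T' ++ p).Chain' r ∧ (T' ++ p) <:+ (T ++ p) ∧
        (∃ s, (T' ++ p).head? = some s ∧ s ∈ Q) ∧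
        ∀ x ∈ EvoNet.interm (T' ++ p), x ∉ Q := by
  intro n
  induction n with
  | zero =>
    intro T hT hc hnd hl hs
    by_cases hex : ∃ x ∈ EvoNet.interm (T ++ p), x ∈ Q
    · obtain ⟨x, hxi, hxQ⟩ := hex
      have hxne : x ≠ h := aux_interm_ne_last hnd hl hxi
      have hxm : x ∈ T ++ p := List.mem_of_mem_tail (aux_interm_mem hxi)
      have hxT : x ∈ T := by
        rcases List.mem_append.1 hxm with hxT | hxp
        · exact hxT
        · exact absurd (hpQ x hxp hxQ) hxne
      have : T = [] := List.length_eq_zero_iff.1 (Nat.le_zero.1 hT)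
      subst this
      simp at hxT
    · push_neg at hex
      exact ⟨T, hc, List.suffix_refl _, hs, hex⟩
  | succ n ih =>
    intro T hT hc hnd hl hs
    by_cases hex : ∃ x ∈ EvoNet.interm (T ++ p), x ∈ Q
    · obtain ⟨x, hxi, hxQ⟩ := hex
      have hxne : x ≠ h := aux_interm_ne_last hnd hl hxi
      have hxtail : x ∈ (T ++ p).tail := aux_interm_mem hxi
      have hxm : x ∈ T ++ p := List.mem_of_mem_tail hxtail
      have hxT : x ∈ T := by
        rcases List.mem_append.1 hxm with hxT | hxp
        · exact hxT
        · exact absurd (hpQ x hxp hxQ) hxne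
      obtain ⟨T₁, T₂, rfl⟩ := List.append_of_mem hxT
      have hT₁ : T₁ ≠ [] := by
        rintro rfl
        have hhead : ((x :: T₂) ++ p).head? = some x := rfl
        simp only [List.nil_append] at hhead hxtail hnd
        exact aux_tail_ne_head hnd hhead hxtail rfl
      have hsuf : ((x :: T₂) ++ p) <:+ ((T₁ ++ x :: T₂) ++ p) :=
        ⟨T₁, by simp⟩
      have hlen' : (x :: T₂).length ≤ n := by
        have h1 : 1 ≤ T₁.length := by
          cases T₁ with
          | nil => exact absurd rfl hT₁
          | cons _ _ => simp
        simp only [List.length_append, List.length_cons] at hT ⊢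
        omega
      obtain ⟨T', hc', hsuf', hhead', hdisj'⟩ := ih (x :: T₂) hlen'
        (hc.suffix hsuf) (List.Nodup.sublist hsuf.sublist hnd)
        (by rw [← aux_getLast?_suffix hsuf (by simp)]; exact hl)
        ⟨x, rfl, hxQ⟩
      exact ⟨T', hc', hsuf'.trans hsuf, hhead', hdisj'⟩
    · push_neg at hex
      exact ⟨T, hc, List.suffix_refl _, hs, hex⟩

end Aux

theorem mca_gives_reticulation_cycle {V : Type*} (N : EvoNet V)
    (h u v : V) (hh : N.IsHybrid h) (huv : u ≠ v)
    (p q : List V) (hp : N.IsPath p) (hq : N.IsPath q)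
    (hlp : 2 ≤ p.length) (hlq : 2 ≤ q.length)
    (hop : p.head? = some u) (hoq : q.head? = some v)
    (hep : p.getLast? = some h) (heq : q.getLast? = some h)
    (hshare : ∀ x : V, x ∈ p → x ∈ q → x = h)
    (hmca : ∀ w : V, N.IsMCA w u v → w ≠ u ∧ w ≠ v) :
    ∃ c : EvoNet.RetCycle N, c.hend = h ∧ u ∈ c.nodes ∧ v ∈ c.nodes := by
  classical
  obtain ⟨hpne, hpc⟩ := hp
  obtain ⟨hqne, hqc⟩ := hq
  -- neither of u, v is an ancestor of the other
  have hnuv : ¬ N.Desc u v := by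
    intro hd
    exact (hmca u ⟨Relation.ReflTransGen.refl, hd, fun z hzu _ huz =>
      N.acyclic u (Relation.TransGen.trans_left huz hzu)⟩).1 rfl
  have hnvu : ¬ N.Desc v u := by
    intro hd
    exact (hmca v ⟨hd, Relation.ReflTransGen.refl, fun z _ hzv hvz =>
      N.acyclic v (Relation.TransGen.trans_left hvz hzv)⟩).2 rfl
  have hur : u ≠ N.root := fun e => hnuv (e ▸ N.rooted v)
  have hvr : v ≠ N.root := fun e => hnvu (e ▸ N.rooted u)
  -- proper paths from the root to u and v
  have htu : Relation.TransGen N.arc N.root u := by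
    rcases Relation.reflTransGen_iff_eq_or_transGen.1 (N.rooted u) with h1 | h1
    · exact absurd h1 hur
    · exact h1
  have htv : Relation.TransGen N.arc N.root v := by
    rcases Relation.reflTransGen_iff_eq_or_transGen.1 (N.rooted v) with h1 | h1
    · exact absurd h1 hvr
    · exact h1
  obtain ⟨Du, hDuc, hDuh, hDul, hDulen⟩ := aux_tg_path htu
  obtain ⟨Dv, hDvc, hDvh, hDvl, hDvlen⟩ := aux_tg_path htv
  have hDu_eq : Du.dropLast ++ [u] = Du := List.dropLast_append_getLast? u hDul
  have hDv_eq : Dv.dropLast ++ [v] = Dv := List.dropLast_append_getLast? v hDvl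
  have hDne : Du.dropLast ≠ [] := by
    intro h0
    have h1 : Du.dropLast.length = 0 := by rw [h0]; rfl
    rw [List.length_dropLast] at h1
    omega
  have hEne : Dv.dropLast ≠ [] := by
    intro h0
    have h1 : Dv.dropLast.length = 0 := by rw [h0]; rfl
    rw [List.length_dropLast] at h1
    omega
  -- glue: P0 = D ++ p is a path root ⇝ h through u; Q0 = E ++ q likewise
  have hPc : (Du.dropLast ++ p).Chain' N.arc := by
    refine List.isChain_append.2 ⟨hDuc.prefix (List.dropLast_prefix Du), hpc, ?_⟩
    intro x hx y hy
    rw [hop] at hy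
    simp only [Option.mem_def, Option.some.injEq] at hy
    subst hy
    have hDuc' : (Du.dropLast ++ [u]).Chain' N.arc := by rw [hDu_eq]; exact hDuc
    exact (List.isChain_append.1 hDuc').2.2 x hx u rfl
  have hQc : (Dv.dropLast ++ q).Chain' N.arc := by
    refine List.isChain_append.2 ⟨hDvc.prefix (List.dropLast_prefix Dv), hqc, ?_⟩
    intro x hx y hy
    rw [hoq] at hy
    simp only [Option.mem_def, Option.some.injEq] at hy
    subst hy
    have hDvc' : (Dv.dropLast ++ [v]).Chain' N.arc := by rw [hDv_eq]; exact hDvc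
    exact (List.isChain_append.1 hDvc').2.2 x hx v rfl
  have hPhead : (Du.dropLast ++ p).head? = some N.root := by
    rw [aux_head?_append_of_ne_nil hDne, aux_head?_dropLast hDulen]
    exact hDuh
  have hQhead : (Dv.dropLast ++ q).head? = some N.root := by
    rw [aux_head?_append_of_ne_nil hEne, aux_head?_dropLast hDvlen]
    exact hDvh
  -- descendance facts
  have hmemD : ∀ x ∈ Du.dropLast, N.Desc x u := fun x hx =>
    aux_chain'_last_rtg hDuc hDul (List.dropLast_subset _ hx)
  have hmemE : ∀ x ∈ Dv.dropLast, N.Desc x v := fun x hx =>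
    aux_chain'_last_rtg hDvc hDvl (List.dropLast_subset _ hx)
  have hmemp : ∀ x ∈ p, N.Desc u x := fun x hx => aux_chain'_head_rtg hpc hop hx
  have hmemq : ∀ x ∈ q, N.Desc v x := fun x hx => aux_chain'_head_rtg hqc hoq hx
  have hpQ : ∀ x ∈ p, x ∈ Dv.dropLast ++ q → x = h := by
    intro x hx hxQ
    rcases List.mem_append.1 hxQ with hE | hq'
    · exact absurd ((hmemp x hx).trans (hmemE x hE)) hnuv
    · exact hshare x hx hq'
  have hqP : ∀ x ∈ q, x ∈ Du.dropLast ++ p → x = h := by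
    intro x hx hxP
    rcases List.mem_append.1 hxP with hD | hp'
    · exact absurd ((hmemq x hx).trans (hmemD x hD)) hnvu
    · exact hshare x hp' hx
  have hPnodup : (Du.dropLast ++ p).Nodup := aux_chain'_nodup N.acyclic hPc
  have hpnodup : p.Nodup := aux_chain'_nodup N.acyclic hpc
  have hPlast : (Du.dropLast ++ p).getLast? = some h := by
    rw [List.getLast?_append_of_ne_nil _ hpne]; exact hep
  have hQlast : (Dv.dropLast ++ q).getLast? = some h := by
    rw [List.getLast?_append_of_ne_nil _ hqne]; exact heq
  have hrootQ : N.root ∈ Dv.dropLast ++ q := aux_mem_of_head? hQhead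
  -- shrink to get the split node s
  obtain ⟨T', hT'c, hT'suf, ⟨s, hshead, hsQ⟩, hT'disj⟩ :=
    aux_shrink (Dv.dropLast ++ q) p h hpQ Du.dropLast.length Du.dropLast le_rfl hPc hPnodup hPlast
      ⟨N.root, hPhead, hrootQ⟩
  have hPne : T' ++ p ≠ [] := List.append_ne_nil_of_right_ne_nil _ hpne
  have hPnd : (T' ++ p).Nodup := List.Nodup.sublist hT'suf.sublist hPnodup
  have hPlast' : (T' ++ p).getLast? = some h := by
    rw [← aux_getLast?_suffix hT'suf hPne]; exact hPlast
  have hPlen : 2 ≤ (T' ++ p).length := le_trans hlp (by simp)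
  have hsne_h : s ≠ h := aux_head_ne_last hPnd hshead hPlast' hPlen
  have hsP : s ∈ Du.dropLast ++ p := hT'suf.subset (aux_mem_of_head? hshead)
  have hsnq : s ∉ q := fun hsq => hsne_h (hqP s hsq hsP)
  obtain ⟨Q₁, Q₂, hQdec⟩ := List.append_of_mem hsQ
  have hQsuf : (s :: Q₂) <:+ Dv.dropLast ++ q := ⟨Q₁, hQdec.symm⟩
  have hqQs : q <:+ s :: Q₂ := by
    rcases List.suffix_or_suffix_of_suffix (⟨Dv.dropLast, rfl⟩ : q <:+ Dv.dropLast ++ q) hQsuf with h1 | h1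
    · exact h1
    · exact absurd (h1.subset (List.mem_cons_self (a := s) (l := Q₂))) hsnq
  have hQsc : (s :: Q₂).Chain' N.arc := hQc.suffix hQsuf
  have hQslast : (s :: Q₂).getLast? = some h := by
    rw [← aux_getLast?_suffix hQsuf (List.cons_ne_nil s Q₂)]; exact hQlast
  have hQslen : 2 ≤ (s :: Q₂).length := le_trans hlq hqQs.length_le
  have hvQs : v ∈ s :: Q₂ := hqQs.subset (aux_mem_of_head? hoq)
  have huP : u ∈ T' ++ p := List.mem_append_right _ (aux_mem_of_head? hop)
  have hunQ : u ∉ Dv.dropLast ++ q := by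
    intro hx
    rcases List.mem_append.1 hx with hE | hq'
    · exact hnuv (hmemE u hE)
    · exact aux_head_ne_last hpnodup hop hep hlp
        (hshare u (aux_mem_of_head? hop) hq')
  refine ⟨{ hend := h, p := T' ++ p, q := s :: Q₂,
            isPath_p := ⟨hPne, hT'c⟩,
            isPath_q := ⟨List.cons_ne_nil s Q₂, hQsc⟩,
            len_p := hPlen, len_q := hQslen,
            same_origin := by rw [hshead]; rfl,
            last_p := hPlast', last_q := hQslast,
            hybrid := hh,
            intDisjoint := fun x hx hx2 =>
              hT'disj x hx (hQsuf.subset (List.mem_of_mem_tail (aux_interm_mem hx2))),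
            ne := fun e => hunQ (hQsuf.subset (e ▸ huP)) },
    rfl, Or.inl huP, Or.inr hvQs⟩
end

section
/- In a 1-nested network, if a node v has two hybrid children h1 and h2, then v is the split node of a reticulation cycle for at least one of h1, h2. -/
namespace EvoNetAux

variable {V : Type*}

lemma split_last_mem {S : Set V} :
    ∀ (l : List V), (∃ x ∈ l, x ∈ S) →
      ∃ l₁ s l₂, l = l₁ ++ s :: l₂ ∧ s ∈ S ∧ ∀ x ∈ l₂, x ∉ S := by
  intro l
  induction l using List.reverseRecOn with
  | nil => rintro ⟨x, hx, _⟩; simp at hx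
  | append_singleton l a ih =>
    intro hex
    by_cases ha : a ∈ S
    · exact ⟨l, a, [], rfl, ha, by simp⟩
    · obtain ⟨x, hx, hxS⟩ := hex
      have hx' : x ∈ l := by
        rcases List.mem_append.1 hx with h | h
        · exact h
        · simp only [List.mem_singleton] at h; subst h; exact absurd hxS ha
      obtain ⟨l₁, s, l₂, rfl, hs, h₂⟩ := ih ⟨x, hx', hxS⟩
      refine ⟨l₁, s, l₂ ++ [a], by simp, hs, ?_⟩
      intro y hy
      rcases List.mem_append.1 hy with h | h
      · exact h₂ y h
      · simp only [List.mem_singleton] at h; subst h; exact ha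

/-- Any parent of a hybrid node is either the split node or an intermediate
node of some reticulation cycle for it. -/
lemma parent_split_or_interm (N : EvoNet V) {v h : V}
    (hh : N.IsHybrid h) (hv : N.arc v h) :
    ∃ c : EvoNet.RetCycle N, c.hend = h ∧ (c.SplitIs v ∨ v ∈ EvoNet.interm c.p) := by
  obtain ⟨a, b, hab, haa, hbb⟩ := hh
  obtain ⟨u, huv, hu⟩ : ∃ u, u ≠ v ∧ N.arc u h := by
    by_cases hav : a = v
    · exact ⟨b, fun hbv => hab (hav.trans hbv.symm), hbb⟩
    · exact ⟨a, hav, haa⟩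
  obtain ⟨lp, hlp, hlpl⟩ := List.exists_isChain_cons_of_relationReflTransGen (N.rooted v)
  obtain ⟨lq, hlq, hlql⟩ := List.exists_isChain_cons_of_relationReflTransGen (N.rooted u)
  set P : List V := N.root :: lp with hPdef
  set Q : List V := N.root :: lq with hQdef
  have hPc : P.Chain' N.arc := hlp
  have hQc : Q.Chain' N.arc := hlq
  have hPlast : P.getLast? = some v := by
    rw [List.getLast?_eq_getLast (l := P) (List.cons_ne_nil _ _)]; exact congrArg some hlpl
  have hQlast : Q.getLast? = some u := by
    rw [List.getLast?_eq_getLast (l := Q) (List.cons_ne_nil _ _)]; exact congrArg some hlql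
  obtain ⟨q₁, s, q₂, hQeq, hsP, hq₂⟩ :=
    split_last_mem (S := {x | x ∈ P}) Q
      ⟨N.root, List.mem_cons_self, List.mem_cons_self⟩
  obtain ⟨p₁, p₂, hPeq⟩ := List.append_of_mem hsP
  -- the two merge paths
  set cp : List V := s :: (p₂ ++ [h]) with hcpdef
  set cq : List V := s :: (q₂ ++ [h]) with hcqdef
  have hcp2 : cp = (s :: p₂) ++ [h] := by simp [hcpdef]
  have hcq2 : cq = (s :: q₂) ++ [h] := by simp [hcqdef]
  have hvlast : (s :: p₂).getLast? = some v := by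
    rw [hPeq, List.getLast?_append] at hPlast
    rw [List.getLast?_eq_getLast (l := s :: p₂) (List.cons_ne_nil _ _)] at hPlast ⊢
    simpa using hPlast
  have hulast : (s :: q₂).getLast? = some u := by
    rw [hQeq, List.getLast?_append] at hQlast
    rw [List.getLast?_eq_getLast (l := s :: q₂) (List.cons_ne_nil _ _)] at hQlast ⊢
    simpa using hQlast
  have hcp_chain : cp.Chain' N.arc := by
    rw [hcp2]
    refine List.isChain_append.2 ⟨hPc.suffix ⟨p₁, hPeq.symm⟩, List.isChain_singleton _, ?_⟩
    intro x hx y hy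
    rw [hvlast] at hx
    simp only [List.head?_cons, Option.mem_def, Option.some.injEq] at hx hy
    subst hx; subst hy; exact hv
  have hcq_chain : cq.Chain' N.arc := by
    rw [hcq2]
    refine List.isChain_append.2 ⟨hQc.suffix ⟨q₁, hQeq.symm⟩, List.isChain_singleton _, ?_⟩
    intro x hx y hy
    rw [hulast] at hx
    simp only [List.head?_cons, Option.mem_def, Option.some.injEq] at hx hy
    subst hx; subst hy; exact hu
  have hip : EvoNet.interm cp = {x | x ∈ p₂} := by
    simp [EvoNet.interm, hcpdef, List.dropLast_concat]
  have hiq : EvoNet.interm cq = {x | x ∈ q₂} := by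
    simp [EvoNet.interm, hcqdef, List.dropLast_concat]
  have hp₂P : ∀ x ∈ p₂, x ∈ P := by
    intro x hx; rw [hPeq]; exact List.mem_append.2 (Or.inr (List.mem_cons_of_mem _ hx))
  refine ⟨⟨h, cp, cq, ⟨List.cons_ne_nil _ _, hcp_chain⟩, ⟨List.cons_ne_nil _ _, hcq_chain⟩,
    by simp [hcpdef], by simp [hcqdef], rfl,
    by rw [hcp2]; exact List.getLast?_concat,
    by rw [hcq2]; exact List.getLast?_concat,
    ⟨a, b, hab, haa, hbb⟩, ?_, ?_⟩, rfl, ?_⟩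
  · intro x hx hx'
    rw [hip] at hx; rw [hiq] at hx'
    exact hq₂ x hx' (hp₂P x hx)
  · intro heq
    have hpq : p₂ = q₂ := by
      have := heq
      rw [hcpdef, hcqdef] at this
      exact List.append_cancel_right (List.cons_injective.eq_iff.1 this)
    rcases List.eq_nil_or_concat p₂ with hp | ⟨t, c, hp⟩
    · subst hp
      have hsv : s = v := by simpa using hvlast
      have hsu : s = u := by rw [← hpq] at hulast; simpa using hulast
      exact huv (hsu.symm.trans hsv)
    · have hc : c ∈ p₂ := by rw [hp]; simp
      exact hq₂ c (hpq ▸ hc) (hp₂P c hc)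
  · rcases List.eq_nil_or_concat p₂ with hp | ⟨t, c, hp⟩
    · left
      have hsv : s = v := by rw [hp] at hvlast; simpa using hvlast
      show cp.head? = some v
      simp [hcpdef, hsv]
    · right
      rw [hip]
      have hcv : c = v := by
        rw [hp, List.concat_eq_append, ← List.cons_append, List.getLast?_concat] at hvlast
        exact Option.some.inj hvlast
      rw [hp]
      exact Set.mem_setOf.2 (by simp [hcv, List.concat_eq_append])

end EvoNetAux

theorem oneNested_two_hybrid_children_split {V : Type*} (N : EvoNet V)
    (h1n : N.OneNested) (v h₁ h₂ : V) (hne : h₁ ≠ h₂)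
    (hh₁ : N.IsHybrid h₁) (hh₂ : N.IsHybrid h₂)
    (ha₁ : N.arc v h₁) (ha₂ : N.arc v h₂) :
    (∃ c : EvoNet.RetCycle N, c.hend = h₁ ∧ c.SplitIs v) ∨
    (∃ c : EvoNet.RetCycle N, c.hend = h₂ ∧ c.SplitIs v) := by
  obtain ⟨c₁, hc₁, hd₁⟩ := EvoNetAux.parent_split_or_interm N hh₁ ha₁
  obtain ⟨c₂, hc₂, hd₂⟩ := EvoNetAux.parent_split_or_interm N hh₂ ha₂
  rcases hd₁ with hs | hi₁
  · exact Or.inl ⟨c₁, hc₁, hs⟩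
  rcases hd₂ with hs | hi₂
  · exact Or.inr ⟨c₂, hc₂, hs⟩
  exact absurd (Or.inl hi₂ : v ∈ c₂.intermNodes)
    (h1n c₁ c₂ (by rw [hc₁, hc₂]; exact hne) v (Or.inl hi₁))
end
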